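/- arXiv:2311.01948 — 5 statements merged into one kernel-verified Lean document; each statement's English description precedes it below -/
import Mathlib

section
/- Let n >= 1, let sigma1 and sigma2 be positive finite Borel measures on T^n, let w be in D^n, let q be in L^2(sigma2), and suppose the Cauchy transform of the complex measure nu := C(.,w)*sigma1 - q*sigma2 vanishes identically on D^n. If N is a Borel subset of T^n that is a null set for A(D^n)-perp, then the restriction sigma1|_N is absolutely continuous with respect to sigma2 and its Radon-Nikodym derivative d(sigma1|_N)/d(sigma2) belongs to L^2(sigma2); in fact sigma1|_N = (q / C(.,w)) * sigma2|_N. -/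
open MeasureTheory Complex Set Filter Topology MvPolynomial

noncomputable section

/-- The torus `T^n` as a subset of `ℂ^n`. -/
def torus (n : ℕ) : Set (Fin n → ℂ) := {z | ∀ i, ‖z i‖ = 1}

/-- The open unit polydisc `D^n`. -/
def polydisc (n : ℕ) : Set (Fin n → ℂ) := {z | ∀ i, ‖z i‖ < 1}

/-- The product Cauchy kernel `C(z,w) = ∏ 1/(1 - z_j conj(w_j))`. -/
def cauchyKer {n : ℕ} (z w : Fin n → ℂ) : ℂ :=
  ∏ i, (1 - z i * (starRingEnd ℂ) (w i))⁻¹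

/-- The product Poisson kernel `∏ (1-|z_j|^2)/|ζ_j - z_j|^2`. -/
def poissonKer {n : ℕ} (z ζ : Fin n → ℂ) : ℝ :=
  ∏ i, (1 - ‖z i‖ ^ 2) / ‖ζ i - z i‖ ^ 2

/-- `σ` is the Clark-Aleksandrov measure of `b` at parameter `α`: a finite positive
Borel measure carried by the torus whose Poisson integral is `(1-|b|^2)/|α-b|^2`. -/
def IsClarkMeasure (n : ℕ) (b : (Fin n → ℂ) → ℂ) (α : ℂ)
    (σ : Measure (Fin n → ℂ)) : Prop :=
  IsFiniteMeasure σ ∧ σ (torus n)ᶜ = 0 ∧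
    ∀ z ∈ polydisc n, ∫ ζ, poissonKer z ζ ∂σ =
      (1 - ‖b z‖ ^ 2) / ‖α - b z‖ ^ 2

/-- Normalized Haar (Lebesgue) measure on `T^n`, as a measure on `ℂ^n`. -/
def haarTorus (n : ℕ) : Measure (Fin n → ℂ) :=
  (ENNReal.ofReal (2 * Real.pi))⁻¹ ^ n •
    ((volume : Measure (Fin n → ℝ)).restrict
        (Set.univ.pi fun _ => Set.Ioc (0 : ℝ) (2 * Real.pi))).map
      (fun (t : Fin n → ℝ) i => Complex.exp (t i * Complex.I))

/-- A Borel set `N ⊆ T^n` is a null set for `A(D^n)^⊥`: every complex Borel measure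
on `T^n` (written as `f dρ` with `ρ` a finite positive measure carried by the torus
and `f` integrable) all of whose moments `∫ ζ^k f dρ` vanish gives `N` total
variation zero. -/
def IsNullSetForAnnihilators (n : ℕ) (N : Set (Fin n → ℂ)) : Prop :=
  ∀ (ρ : Measure (Fin n → ℂ)) (f : (Fin n → ℂ) → ℂ),
    IsFiniteMeasure ρ → ρ (torus n)ᶜ = 0 → Integrable f ρ →
    (∀ k : Fin n → ℕ, ∫ ζ, (∏ i, ζ i ^ k i) * f ζ ∂ρ = 0) →
    ∫⁻ ζ in N, ‖f ζ‖₊ ∂ρ = 0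


theorem restriction_to_null_set_absolutely_continuous
    (n : ℕ) (hn : 1 ≤ n)
    (σ₁ σ₂ : Measure (Fin n → ℂ))
    (hσ₁fin : IsFiniteMeasure σ₁) (hσ₂fin : IsFiniteMeasure σ₂)
    (hσ₁car : σ₁ (torus n)ᶜ = 0) (hσ₂car : σ₂ (torus n)ᶜ = 0)
    (w : Fin n → ℂ) (hw : w ∈ polydisc n)
    (q : (Fin n → ℂ) → ℂ) (hq : MemLp q 2 σ₂)
    -- the Cauchy transform of ν = C(·,w) σ₁ - q σ₂ vanishes identically
    (hvanish : ∀ k : Fin n → ℕ,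
      ∫ ζ, (∏ i, (starRingEnd ℂ) (ζ i) ^ k i) * cauchyKer ζ w ∂σ₁ =
      ∫ ζ, (∏ i, (starRingEnd ℂ) (ζ i) ^ k i) * q ζ ∂σ₂)
    (N : Set (Fin n → ℂ)) (hN : MeasurableSet N)
    (hNnull : IsNullSetForAnnihilators n N) :
    σ₁.restrict N ≪ σ₂ ∧
    (∫⁻ ζ, ((σ₁.restrict N).rnDeriv σ₂ ζ) ^ 2 ∂σ₂ < ⊤) ∧
    -- in fact σ₁|_N = (q / C(·,w)) σ₂|_N
    (∀ A : Set (Fin n → ℂ), MeasurableSet A →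
      ((σ₁ (A ∩ N)).toReal : ℂ) = ∫ ζ in A ∩ N, q ζ / cauchyKer ζ w ∂σ₂) := by
  haveI := hσ₁fin; haveI := hσ₂fin
  classical
  -- measurable representative of q
  set q' : (Fin n → ℂ) → ℂ := hq.1.mk q with hq'def
  have hq'meas : Measurable q' := hq.1.stronglyMeasurable_mk.measurable
  have hqq' : q =ᵐ[σ₂] q' := hq.1.ae_eq_mk
  have hq'mem : MemLp q' 2 σ₂ := hq.ae_eq hqq'
  have hq'int : Integrable q' σ₂ := hq'mem.integrable (by norm_num)
  -- the reference measure
  set ρ : Measure (Fin n → ℂ) := σ₁ + σ₂ with hρdef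
  haveI : IsFiniteMeasure ρ := by rw [hρdef]; infer_instance
  have h1 : σ₁ ≪ ρ := Measure.absolutelyContinuous_of_le (Measure.le_add_right le_rfl)
  have h2 : σ₂ ≪ ρ := Measure.absolutelyContinuous_of_le (Measure.le_add_left le_rfl)
  haveI := Measure.haveLebesgueDecomposition_of_finiteMeasure (μ := σ₁) (ν := ρ)
  haveI := Measure.haveLebesgueDecomposition_of_finiteMeasure (μ := σ₂) (ν := ρ)
  have hρcar : ρ (torus n)ᶜ = 0 := by
    rw [hρdef, Measure.add_apply, hσ₁car, hσ₂car, add_zero]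
  have hρtorus : ∀ᵐ ζ ∂ρ, ζ ∈ torus n := by
    rw [ae_iff]; exact hρcar
  have hσ₂torus : ∀ᵐ ζ ∂σ₂, ζ ∈ torus n := by
    rw [ae_iff]; exact hσ₂car
  set g₁ : (Fin n → ℂ) → ENNReal := σ₁.rnDeriv ρ with hg₁def
  set g₂ : (Fin n → ℂ) → ENNReal := σ₂.rnDeriv ρ with hg₂def
  have hg₁meas : Measurable g₁ := Measure.measurable_rnDeriv σ₁ ρ
  have hg₂meas : Measurable g₂ := Measure.measurable_rnDeriv σ₂ ρ
  -- Cauchy kernel facts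
  have hCmeas : Measurable fun ζ : Fin n → ℂ => cauchyKer ζ w :=
    Finset.measurable_prod _ fun i _ =>
      (((measurable_pi_apply i).mul_const _).const_sub 1).inv
  have hfacne : ∀ ζ ∈ torus n, ∀ i, (1 - ζ i * (starRingEnd ℂ) (w i)) ≠ 0 := by
    intro ζ hζ i h
    rw [sub_eq_zero] at h
    have h2 : ‖ζ i * (starRingEnd ℂ) (w i)‖ < 1 := by
      rw [norm_mul, hζ i, one_mul, Complex.norm_conj]; exact hw i
    rw [← h] at h2; simp at h2
  have hCne : ∀ ζ ∈ torus n, cauchyKer ζ w ≠ 0 := by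
    intro ζ hζ
    rw [cauchyKer, Finset.prod_ne_zero_iff]
    exact fun i _ => inv_ne_zero (hfacne ζ hζ i)
  have hCinvbd : ∀ ζ ∈ torus n, ‖(cauchyKer ζ w)⁻¹‖ ≤ 2 ^ n := by
    intro ζ hζ
    rw [cauchyKer, Finset.prod_inv_distrib, inv_inv, norm_prod]
    calc ∏ i, ‖1 - ζ i * (starRingEnd ℂ) (w i)‖
        ≤ ∏ _i : Fin n, (2 : ℝ) := by
          refine Finset.prod_le_prod (fun i _ => norm_nonneg _) (fun i _ => ?_)
          calc ‖1 - ζ i * (starRingEnd ℂ) (w i)‖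
              ≤ ‖(1 : ℂ)‖ + ‖ζ i * (starRingEnd ℂ) (w i)‖ := norm_sub_le _ _
            _ ≤ 1 + 1 := by
                rw [norm_one]
                gcongr
                rw [norm_mul, hζ i,
                  one_mul, Complex.norm_conj]
                exact (hw i).le
            _ = 2 := by norm_num
      _ = 2 ^ n := by simp
  have hCbd : ∀ ζ ∈ torus n, ‖cauchyKer ζ w‖ ≤ ∏ i, (1 - ‖w i‖)⁻¹ := by
    intro ζ hζ
    rw [cauchyKer, norm_prod]
    refine Finset.prod_le_prod (fun i _ => norm_nonneg _) (fun i _ => ?_)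
    have hwi : 0 < 1 - ‖w i‖ := by have := hw i; linarith
    rw [norm_inv]
    have hlow : 1 - ‖w i‖ ≤ ‖1 - ζ i * (starRingEnd ℂ) (w i)‖ := by
      have := norm_sub_norm_le (1 : ℂ) (ζ i * (starRingEnd ℂ) (w i))
      rw [norm_one, norm_mul, hζ i, one_mul,
        Complex.norm_conj] at this
      exact this
    gcongr
  -- the annihilating measure as a density against ρ
  set f : (Fin n → ℂ) → ℂ := fun ζ =>
    (g₁ ζ).toReal • (starRingEnd ℂ) (cauchyKer ζ w)
      - (g₂ ζ).toReal • (starRingEnd ℂ) (q' ζ) with hfdef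
  have hfmeas : Measurable f := by
    apply Measurable.sub
    · exact (hg₁meas.ennreal_toReal.smul (Complex.continuous_conj.measurable.comp hCmeas))
    · exact (hg₂meas.ennreal_toReal.smul (Complex.continuous_conj.measurable.comp hq'meas))
  have hCint : Integrable (fun ζ => (starRingEnd ℂ) (cauchyKer ζ w)) σ₁ := by
    refine Integrable.mono' (integrable_const (∏ i, (1 - ‖w i‖)⁻¹))
      (Complex.continuous_conj.measurable.comp hCmeas).aestronglyMeasurable ?_
    have hσ₁torus : ∀ᵐ ζ ∂σ₁, ζ ∈ torus n := by rw [ae_iff]; exact hσ₁car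
    filter_upwards [hσ₁torus] with ζ hζ
    rw [RCLike.norm_conj]
    exact hCbd ζ hζ
  have hq'conjint : Integrable (fun ζ => (starRingEnd ℂ) (q' ζ)) σ₂ := by
    refine Integrable.mono' hq'int.norm
      (Complex.continuous_conj.measurable.comp hq'meas).aestronglyMeasurable ?_
    filter_upwards with ζ
    rw [RCLike.norm_conj]
  have hT₁ : Integrable (fun ζ => (g₁ ζ).toReal • (starRingEnd ℂ) (cauchyKer ζ w)) ρ :=
    (integrable_rnDeriv_smul_iff h1).mpr hCint
  have hT₂ : Integrable (fun ζ => (g₂ ζ).toReal • (starRingEnd ℂ) (q' ζ)) ρ :=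
    (integrable_rnDeriv_smul_iff h2).mpr hq'conjint
  have hfint : Integrable f ρ := hT₁.sub hT₂
  -- the moments of f vanish
  have hmom : ∀ k : Fin n → ℕ, ∫ ζ, (∏ i, ζ i ^ k i) * f ζ ∂ρ = 0 := by
    intro k
    have hzk_meas : Measurable fun ζ : Fin n → ℂ => ∏ i, ζ i ^ k i :=
      Finset.measurable_prod _ fun i _ => (measurable_pi_apply i).pow_const _
    have hzk1 : ∀ ζ ∈ torus n, ‖∏ i, ζ i ^ k i‖ = 1 := by
      intro ζ hζ
      rw [norm_prod]
      refine Finset.prod_eq_one fun i _ => ?_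
      rw [norm_pow, hζ i, one_pow]
    have hint1 : Integrable
        (fun ζ => (∏ i, ζ i ^ k i) * ((g₁ ζ).toReal • (starRingEnd ℂ) (cauchyKer ζ w))) ρ := by
      refine Integrable.mono' hT₁.norm
        (hzk_meas.mul ((hg₁meas.ennreal_toReal).smul
          (Complex.continuous_conj.measurable.comp hCmeas))).aestronglyMeasurable ?_
      filter_upwards [hρtorus] with ζ hζ
      rw [norm_mul, hzk1 ζ hζ, one_mul]
    have hint2 : Integrable
        (fun ζ => (∏ i, ζ i ^ k i) * ((g₂ ζ).toReal • (starRingEnd ℂ) (q' ζ))) ρ := by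
      refine Integrable.mono' hT₂.norm
        (hzk_meas.mul ((hg₂meas.ennreal_toReal).smul
          (Complex.continuous_conj.measurable.comp hq'meas))).aestronglyMeasurable ?_
      filter_upwards [hρtorus] with ζ hζ
      rw [norm_mul, hzk1 ζ hζ, one_mul]
    have hsplit : ∫ ζ, (∏ i, ζ i ^ k i) * f ζ ∂ρ =
        (∫ ζ, (∏ i, ζ i ^ k i) * ((g₁ ζ).toReal • (starRingEnd ℂ) (cauchyKer ζ w)) ∂ρ)
          - ∫ ζ, (∏ i, ζ i ^ k i) * ((g₂ ζ).toReal • (starRingEnd ℂ) (q' ζ)) ∂ρ := by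
      rw [← integral_sub hint1 hint2]
      refine integral_congr_ae (Eventually.of_forall fun ζ => ?_)
      rw [hfdef]; ring
    have e1 : ∫ ζ, (∏ i, ζ i ^ k i) * ((g₁ ζ).toReal • (starRingEnd ℂ) (cauchyKer ζ w)) ∂ρ
        = ∫ ζ, (∏ i, ζ i ^ k i) * (starRingEnd ℂ) (cauchyKer ζ w) ∂σ₁ := by
      rw [← integral_rnDeriv_smul h1
        (f := fun ζ => (∏ i, ζ i ^ k i) * (starRingEnd ℂ) (cauchyKer ζ w))]
      refine integral_congr_ae (Eventually.of_forall fun ζ => ?_)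
      simp only [Complex.real_smul, hg₁def]; ring
    have e2 : ∫ ζ, (∏ i, ζ i ^ k i) * ((g₂ ζ).toReal • (starRingEnd ℂ) (q' ζ)) ∂ρ
        = ∫ ζ, (∏ i, ζ i ^ k i) * (starRingEnd ℂ) (q' ζ) ∂σ₂ := by
      rw [← integral_rnDeriv_smul h2
        (f := fun ζ => (∏ i, ζ i ^ k i) * (starRingEnd ℂ) (q' ζ))]
      refine integral_congr_ae (Eventually.of_forall fun ζ => ?_)
      simp only [Complex.real_smul, hg₂def]; ring
    have c1 : ∫ ζ, (∏ i, ζ i ^ k i) * (starRingEnd ℂ) (cauchyKer ζ w) ∂σ₁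
        = (starRingEnd ℂ) (∫ ζ, (∏ i, (starRingEnd ℂ) (ζ i) ^ k i) * cauchyKer ζ w ∂σ₁) := by
      rw [← integral_conj]
      refine integral_congr_ae (Eventually.of_forall fun ζ => ?_)
      simp [map_mul, map_prod, map_pow]
    have c2 : ∫ ζ, (∏ i, ζ i ^ k i) * (starRingEnd ℂ) (q' ζ) ∂σ₂
        = (starRingEnd ℂ) (∫ ζ, (∏ i, (starRingEnd ℂ) (ζ i) ^ k i) * q ζ ∂σ₂) := by
      rw [← integral_conj]
      refine integral_congr_ae (hqq'.mono fun ζ hζ => ?_)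
      simp [map_mul, map_prod, map_pow, hζ]
    rw [hsplit, e1, e2, c1, c2, hvanish k, sub_self]
  -- f vanishes a.e. on N
  have hzero : ∫⁻ ζ in N, ‖f ζ‖₊ ∂ρ = 0 := hNnull ρ f ‹_› hρcar hfint hmom
  have hfzero : ∀ᵐ ζ ∂ρ, ζ ∈ N → f ζ = 0 := by
    have h := (lintegral_eq_zero_iff (by
      exact hfmeas.nnnorm.coe_nnreal_ennreal)).mp hzero
    have h2 : ∀ᵐ ζ ∂ρ.restrict N, f ζ = 0 := by
      filter_upwards [h] with ζ hζ
      simpa using hζ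
    exact (ae_restrict_iff' hN).mp h2
  -- pointwise identities on N
  have hptw : ∀ᵐ ζ ∂ρ, ζ ∈ N →
      (((g₁ ζ).toReal : ℂ) = (q' ζ / cauchyKer ζ w) * ((g₂ ζ).toReal : ℂ) ∧
        (g₁ ζ).toReal = ‖q' ζ / cauchyKer ζ w‖ * (g₂ ζ).toReal) := by
    filter_upwards [hfzero, hρtorus] with ζ h0 htor hζN
    have hC := hCne ζ htor
    have h0' : (g₁ ζ).toReal • (starRingEnd ℂ) (cauchyKer ζ w)
        = (g₂ ζ).toReal • (starRingEnd ℂ) (q' ζ) := by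
      have := h0 hζN
      rw [hfdef] at this
      linear_combination this
    have hc : ((g₁ ζ).toReal : ℂ) * (starRingEnd ℂ) (cauchyKer ζ w)
        = ((g₂ ζ).toReal : ℂ) * (starRingEnd ℂ) (q' ζ) := by
      simpa [Complex.real_smul] using h0'
    have hcconj : ((g₁ ζ).toReal : ℂ) * cauchyKer ζ w = ((g₂ ζ).toReal : ℂ) * q' ζ := by
      have := congrArg (starRingEnd ℂ) hc
      simpa [map_mul, Complex.conj_conj, Complex.conj_ofReal] using this
    have hmain : ((g₁ ζ).toReal : ℂ) = (q' ζ / cauchyKer ζ w) * ((g₂ ζ).toReal : ℂ) := by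
      field_simp
      linear_combination hcconj
    refine ⟨hmain, ?_⟩
    have : (g₁ ζ).toReal = ‖((g₁ ζ).toReal : ℂ)‖ := by
      rw [Complex.norm_real, Real.norm_eq_abs, _root_.abs_of_nonneg ENNReal.toReal_nonneg]
    rw [this, hmain, norm_mul, Complex.norm_real, Real.norm_eq_abs,
      _root_.abs_of_nonneg ENNReal.toReal_nonneg]
  -- ENNReal density identity
  set φ : (Fin n → ℂ) → ENNReal := fun ζ => ENNReal.ofReal ‖q' ζ / cauchyKer ζ w‖ with hφdef
  have hφmeas : Measurable φ := by
    apply Measurable.ennreal_ofReal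
    exact (hq'meas.div hCmeas).norm
  have hptwE : ∀ᵐ ζ ∂ρ, ζ ∈ N → g₁ ζ = φ ζ * g₂ ζ := by
    filter_upwards [hptw, Measure.rnDeriv_lt_top σ₁ ρ, Measure.rnDeriv_lt_top σ₂ ρ]
      with ζ h h1t h2t hζN
    have hr := (h hζN).2
    have h1t' : g₁ ζ ≠ ⊤ := h1t.ne
    have h2t' : g₂ ζ ≠ ⊤ := h2t.ne
    rw [← ENNReal.ofReal_toReal h1t', ← ENNReal.ofReal_toReal h2t', hr,
      ENNReal.ofReal_mul (norm_nonneg _)]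
  -- measure identity σ₁|N = (N.indicator φ) σ₂
  have hrestr : σ₁.restrict N = σ₂.withDensity (N.indicator φ) := by
    ext s hs
    rw [Measure.restrict_apply hs, withDensity_apply _ hs, setLIntegral_indicator hN,
      Set.inter_comm N s]
    have hw1 : σ₁ (s ∩ N) = ∫⁻ ζ in s ∩ N, g₁ ζ ∂ρ := by
      conv_lhs => rw [← Measure.withDensity_rnDeriv_eq σ₁ ρ h1]
      rw [withDensity_apply _ (hs.inter hN)]
    rw [hw1]
    have hcg : ∫⁻ ζ in s ∩ N, g₁ ζ ∂ρ = ∫⁻ ζ in s ∩ N, g₂ ζ * φ ζ ∂ρ := by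
      refine lintegral_congr_ae ?_
      have h' : ∀ᵐ ζ ∂ρ.restrict (s ∩ N), ζ ∈ N → g₁ ζ = φ ζ * g₂ ζ :=
        ae_restrict_of_ae hptwE
      filter_upwards [h', ae_restrict_mem (hs.inter hN)] with ζ hζ hmem
      rw [hζ hmem.2, mul_comm]
    rw [hcg]
    exact setLIntegral_rnDeriv_mul h2 hφmeas.aemeasurable (hs.inter hN)
  refine ⟨?_, ?_, ?_⟩
  · rw [hrestr]; exact withDensity_absolutelyContinuous σ₂ _
  · -- square integrability of the density
    have hrd : (σ₁.restrict N).rnDeriv σ₂ =ᵐ[σ₂] N.indicator φ := by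
      rw [hrestr]
      exact Measure.rnDeriv_withDensity σ₂ (hφmeas.indicator hN)
    have hsq : ∫⁻ ζ, ((σ₁.restrict N).rnDeriv σ₂ ζ) ^ 2 ∂σ₂
        = ∫⁻ ζ, (N.indicator φ ζ) ^ 2 ∂σ₂ := by
      refine lintegral_congr_ae (hrd.mono fun ζ hζ => ?_)
      simp only [hζ]
    rw [hsq]
    have hq'2 : Integrable (fun ζ => ‖q' ζ‖ ^ 2) σ₂ := by
      have h := hq'mem.integrable_norm_rpow (by norm_num) (by norm_num)
      refine h.congr (Eventually.of_forall fun ζ => ?_)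
      norm_num [Real.rpow_two]
    have hfin2 : ∫⁻ ζ, ENNReal.ofReal (‖q' ζ‖ ^ 2) ∂σ₂ < ⊤ := by
      rw [← hasFiniteIntegral_iff_ofReal (Eventually.of_forall fun ζ => by positivity)]
      exact hq'2.hasFiniteIntegral
    calc ∫⁻ ζ, (N.indicator φ ζ) ^ 2 ∂σ₂
        ≤ ∫⁻ ζ, ENNReal.ofReal ((2 ^ n) ^ 2) * ENNReal.ofReal (‖q' ζ‖ ^ 2) ∂σ₂ := by
          refine lintegral_mono_ae ?_
          filter_upwards [hσ₂torus] with ζ htor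
          have hb1 : N.indicator φ ζ ≤ φ ζ := Set.indicator_le_self _ _ _
          have hb2 : φ ζ ≤ ENNReal.ofReal (2 ^ n * ‖q' ζ‖) := by
            rw [hφdef]
            refine ENNReal.ofReal_le_ofReal ?_
            rw [div_eq_mul_inv, norm_mul]
            calc ‖q' ζ‖ * ‖(cauchyKer ζ w)⁻¹‖ ≤ ‖q' ζ‖ * 2 ^ n := by
                  exact mul_le_mul_of_nonneg_left (hCinvbd ζ htor) (norm_nonneg _)
              _ = 2 ^ n * ‖q' ζ‖ := mul_comm _ _
          calc (N.indicator φ ζ) ^ 2 ≤ (ENNReal.ofReal (2 ^ n * ‖q' ζ‖)) ^ 2 := by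
                exact pow_le_pow_left₀ (zero_le) (hb1.trans hb2) 2
            _ = ENNReal.ofReal ((2 ^ n) ^ 2) * ENNReal.ofReal (‖q' ζ‖ ^ 2) := by
                rw [← ENNReal.ofReal_pow (by positivity), mul_pow,
                  ENNReal.ofReal_mul (by positivity)]
      _ = ENNReal.ofReal ((2 ^ n) ^ 2) * ∫⁻ ζ, ENNReal.ofReal (‖q' ζ‖ ^ 2) ∂σ₂ := by
          rw [lintegral_const_mul _ (by
            exact (hq'meas.norm.pow_const 2).ennreal_ofReal)]
      _ < ⊤ := ENNReal.mul_lt_top ENNReal.ofReal_lt_top hfin2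
  · -- the explicit formula
    intro A hA
    have hqint : Integrable (fun ζ => q' ζ / cauchyKer ζ w) σ₂ := by
      refine Integrable.mono' (hq'int.norm.const_mul (2 ^ n))
        (hq'meas.div hCmeas).aestronglyMeasurable ?_
      filter_upwards [hσ₂torus] with ζ htor
      rw [div_eq_mul_inv, norm_mul]
      calc ‖q' ζ‖ * ‖(cauchyKer ζ w)⁻¹‖ ≤ ‖q' ζ‖ * 2 ^ n :=
            mul_le_mul_of_nonneg_left (hCinvbd ζ htor) (norm_nonneg _)
        _ = 2 ^ n * ‖q' ζ‖ := mul_comm _ _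
    have e1 : ((σ₁ (A ∩ N)).toReal : ℂ) = ∫ ζ in A ∩ N, ((g₁ ζ).toReal : ℂ) ∂ρ := by
      rw [← measureReal_def, ← Measure.setIntegral_toReal_rnDeriv h1 (A ∩ N)]
      exact integral_ofReal.symm
    have e2 : ∫ ζ in A ∩ N, ((g₁ ζ).toReal : ℂ) ∂ρ
        = ∫ ζ in A ∩ N, (g₂ ζ).toReal • (q' ζ / cauchyKer ζ w) ∂ρ := by
      refine integral_congr_ae ?_
      have h' : ∀ᵐ ζ ∂ρ.restrict (A ∩ N), ζ ∈ N →
          (((g₁ ζ).toReal : ℂ) = (q' ζ / cauchyKer ζ w) * ((g₂ ζ).toReal : ℂ) ∧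
            (g₁ ζ).toReal = ‖q' ζ / cauchyKer ζ w‖ * (g₂ ζ).toReal) :=
        ae_restrict_of_ae hptw
      filter_upwards [h', ae_restrict_mem (hA.inter hN)] with ζ hζ hmem
      rw [(hζ hmem.2).1, Complex.real_smul, mul_comm]
    have e3 : ∫ ζ in A ∩ N, (g₂ ζ).toReal • (q' ζ / cauchyKer ζ w) ∂ρ
        = ∫ ζ in A ∩ N, q' ζ / cauchyKer ζ w ∂σ₂ :=
      setIntegral_rnDeriv_smul h2 (hA.inter hN)
    have e4 : ∫ ζ in A ∩ N, q' ζ / cauchyKer ζ w ∂σ₂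
        = ∫ ζ in A ∩ N, q ζ / cauchyKer ζ w ∂σ₂ := by
      refine integral_congr_ae ?_
      filter_upwards [ae_restrict_of_ae hqq'] with ζ hζ
      rw [hζ]
    rw [e1, e2, e3, e4]
end
end

section
/- Let p be a polynomial in C[z_1,z_2] of bidegree (m,n) with no zeros in D^2 such that p and its reflection p~ have no common nonconstant polynomial factor, and let b = p~/p be the associated rational inner function. Assume b is nonconstant, b(0,0) = 0, and that there exist a constant c in C and holomorphic functions f, g : D -> C with f(0) = g(0) = 0 such that (1 - z_1*z_2)/(1 - b(z_1,z_2)) = c + f(z_1) + g(z_2) for all (z_1,z_2) in D^2. Then there exists a in C with |a| <= 1/2 such that b(z_1,z_2) = (z_1*z_2 + a*z_1 + conj(a)*z_2)/(1 + a*z_1 + conj(a)*z_2) for all (z_1,z_2) in D^2. -/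
open MeasureTheory Complex Set Filter Topology MvPolynomial

noncomputable section

/-- The torus `T^2` as a subset of `ℂ × ℂ`. -/
def torus2 : Set (ℂ × ℂ) := {z | ‖z.1‖ = 1 ∧ ‖z.2‖ = 1}

/-- The open unit bidisc `D^2`. -/
def bidisc : Set (ℂ × ℂ) := {z | ‖z.1‖ < 1 ∧ ‖z.2‖ < 1}

/-- The product Cauchy kernel on the bidisc. -/
def cauchyKer2 (z w : ℂ × ℂ) : ℂ :=
  ((1 - z.1 * (starRingEnd ℂ) w.1) * (1 - z.2 * (starRingEnd ℂ) w.2))⁻¹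

/-- The product Poisson kernel on the bidisc. -/
def poissonKer2 (z ζ : ℂ × ℂ) : ℝ :=
  ((1 - ‖z.1‖ ^ 2) / ‖ζ.1 - z.1‖ ^ 2) *
    ((1 - ‖z.2‖ ^ 2) / ‖ζ.2 - z.2‖ ^ 2)

/-- `σ` is the Clark-Aleksandrov measure of `b : D^2 → D` at parameter `α`. -/
def IsClarkMeasure2 (b : ℂ × ℂ → ℂ) (α : ℂ) (σ : Measure (ℂ × ℂ)) : Prop :=
  IsFiniteMeasure σ ∧ σ torus2ᶜ = 0 ∧
    ∀ z ∈ bidisc, ∫ ζ, poissonKer2 z ζ ∂σ =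
      (1 - ‖b z‖ ^ 2) / ‖α - b z‖ ^ 2

/-- Normalized Haar (Lebesgue) measure on the unit circle `T`, as a measure on `ℂ`. -/
def haarCircle : Measure ℂ :=
  (ENNReal.ofReal (2 * Real.pi))⁻¹ •
    ((volume : Measure ℝ).restrict (Set.Ioc (0 : ℝ) (2 * Real.pi))).map
      (fun t : ℝ => Complex.exp (t * Complex.I))

/-- Normalized Haar (Lebesgue) measure on `T^2`, as a measure on `ℂ × ℂ`. -/
def haarTorus2 : Measure (ℂ × ℂ) :=
  (ENNReal.ofReal (2 * Real.pi))⁻¹ ^ 2 •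
    ((volume : Measure (ℝ × ℝ)).restrict
        (Set.Ioc (0 : ℝ) (2 * Real.pi) ×ˢ Set.Ioc (0 : ℝ) (2 * Real.pi))).map
      (fun t : ℝ × ℝ => (Complex.exp (t.1 * Complex.I), Complex.exp (t.2 * Complex.I)))

lemma evalAnalytic (q : MvPolynomial (Fin 2) ℂ) :
    AnalyticOnNhd ℂ (fun z : ℂ × ℂ => MvPolynomial.eval ![z.1, z.2] q) univ := by
  induction q using MvPolynomial.induction_on with
  | C a => simpa using (analyticOnNhd_const : AnalyticOnNhd ℂ (fun _ : ℂ × ℂ => a) univ)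
  | add q r hq hr => simpa [map_add, Pi.add_def] using hq.add hr
  | mul_X q i hq =>
      simp only [map_mul, MvPolynomial.eval_X]
      apply hq.mul
      fin_cases i
      · simpa using (analyticOnNhd_fst : AnalyticOnNhd ℂ (fun z : ℂ × ℂ => z.1) univ)
      · simpa using (analyticOnNhd_snd : AnalyticOnNhd ℂ (fun z : ℂ × ℂ => z.2) univ)

lemma entire_eq_zero {E : Type*} [NormedAddCommGroup E] [NormedSpace ℂ E]
    (F : E → ℂ) (hF : AnalyticOnNhd ℂ F univ) {U : Set E} (hU : IsOpen U)
    {x0 : E} (hx : x0 ∈ U) (h : ∀ x ∈ U, F x = 0) : ∀ x, F x = 0 := by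
  have := hF.eqOn_zero_of_preconnected_of_eventuallyEq_zero isPreconnected_univ (mem_univ x0)
    (Filter.eventually_of_mem (hU.mem_nhds hx) h)
  intro x; exact this (mem_univ x)

lemma eq_on_of_dense {f lin : ℂ → ℂ} {U : Set ℂ} (hf : ContinuousOn f U)
    (hlin : Continuous lin) {S : Set ℂ} (hS : S ⊆ U)
    (heq : ∀ x ∈ S, f x = lin x) {x : ℂ} (hx : x ∈ U) (hcl : x ∈ closure S) :
    f x = lin x := by
  have hne : (𝓝[S] x).NeBot := mem_closure_iff_nhdsWithin_neBot.mp hcl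
  have h1 : Tendsto f (𝓝[S] x) (𝓝 (f x)) := ((hf x hx).mono hS).tendsto
  have h2 : Tendsto f (𝓝[S] x) (𝓝 (lin x)) := by
    refine Tendsto.congr' ?_ ((hlin.tendsto x).mono_left nhdsWithin_le_nhds)
    filter_upwards [self_mem_nhdsWithin] with y hy
    exact (heq y hy).symm
  exact tendsto_nhds_unique h1 h2

lemma dense_good (h : ℂ → ℂ) (hh : AnalyticOnNhd ℂ h univ) (h0 : h 0 ≠ 0) :
    ∀ x0 : ℂ, ∀ ε : ℝ, 0 < ε →
      ∃ x : ℂ, dist x x0 < ε ∧ x ≠ 0 ∧ h ((starRingEnd ℂ) x)⁻¹ ≠ 0 := by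
  intro x0 ε hε
  by_contra hcon
  push_neg at hcon
  -- pick y0 ≠ 0 in ball(x0, ε)
  obtain ⟨y0, hy0ball, hy0ne⟩ : ∃ y0 : ℂ, dist y0 x0 < ε ∧ y0 ≠ 0 := by
    rcases eq_or_ne x0 0 with h' | h'
    · subst h'
      refine ⟨Complex.ofReal (ε/2), ?_, ?_⟩
      · simp only [dist_eq, sub_zero, Complex.norm_real, Real.norm_eq_abs]
        rw [abs_of_pos (by linarith)]; linarith
      · simpa using ne_of_gt (by linarith : (0:ℝ) < ε/2)
    · exact ⟨x0, by simpa using hε, h'⟩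
  set δ : ℝ := min (ε - dist y0 x0) (‖y0‖) with hδ
  have hδpos : 0 < δ := lt_min (by linarith) (by simpa [norm_pos_iff] using hy0ne)
  -- every x in ball(y0, δ) is nonzero and in ball(x0, ε), so h(ι x) = 0
  have hzero : ∀ x ∈ Metric.ball y0 δ, x ≠ 0 ∧ h ((starRingEnd ℂ) x)⁻¹ = 0 := by
    intro x hx
    rw [Metric.mem_ball] at hx
    have hxne : x ≠ 0 := by
      intro hx0
      rw [hx0] at hx
      simp only [dist_eq, zero_sub, norm_neg] at hx
      have := min_le_right (ε - dist y0 x0) (‖y0‖)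
      rw [← hδ] at this; linarith
    have hxball : dist x x0 < ε := by
      calc dist x x0 ≤ dist x y0 + dist y0 x0 := dist_triangle _ _ _
        _ < δ + dist y0 x0 := by linarith
        _ ≤ (ε - dist y0 x0) + dist y0 x0 := by
            have := min_le_left (ε - dist y0 x0) (‖y0‖); linarith
        _ = ε := by ring
    exact ⟨hxne, hcon x hxball hxne⟩
  -- the reflected set
  set W : Set ℂ := {y : ℂ | y ≠ 0} ∩ (fun y : ℂ => ((starRingEnd ℂ) y)⁻¹) ⁻¹' (Metric.ball y0 δ)
    with hW
  have hWopen : IsOpen W := by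
    apply ContinuousOn.isOpen_inter_preimage _ _ Metric.isOpen_ball
    · apply ContinuousOn.inv₀
      · exact Complex.continuous_conj.continuousOn
      · intro y hy
        simpa using hy
    · exact isOpen_ne
  have hinv : ∀ y : ℂ, y ≠ 0 → ((starRingEnd ℂ) (((starRingEnd ℂ) y)⁻¹))⁻¹ = y := by
    intro y hy
    rw [map_inv₀, Complex.conj_conj, inv_inv]
  have hy0mem : ((starRingEnd ℂ) y0)⁻¹ ∈ W := by
    constructor
    · simp only [mem_setOf_eq, ne_eq, inv_eq_zero, map_eq_zero]
      exact hy0ne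
    · simp only [Set.mem_preimage]
      rw [hinv y0 hy0ne]
      exact Metric.mem_ball_self hδpos
  have hzW : ∀ y ∈ W, h y = 0 := by
    rintro y ⟨hy1, hy2⟩
    have hy1' : y ≠ 0 := hy1
    have := (hzero _ hy2).2
    rwa [hinv y hy1'] at this
  have := entire_eq_zero h hh hWopen hy0mem hzW 0
  exact h0 this

set_option maxHeartbeats 1000000 in
theorem rif_with_degenerate_clark_quotient_is_favard
    (p pt : MvPolynomial (Fin 2) ℂ)
    (hp : ∀ z : ℂ × ℂ, z ∈ bidisc → MvPolynomial.eval ![z.1, z.2] p ≠ 0)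
    -- pt is the reflection of p with respect to its bidegree
    (hpt : ∀ z : ℂ × ℂ, z.1 ≠ 0 → z.2 ≠ 0 →
      MvPolynomial.eval ![z.1, z.2] pt =
        z.1 ^ p.degreeOf 0 * z.2 ^ p.degreeOf 1 *
          (starRingEnd ℂ)
            (MvPolynomial.eval ![((starRingEnd ℂ) z.1)⁻¹, ((starRingEnd ℂ) z.2)⁻¹] p))
    -- p and pt have no common nonconstant factor
    (hcoprime : ¬ ∃ q : MvPolynomial (Fin 2) ℂ, 0 < q.totalDegree ∧ q ∣ p ∧ q ∣ pt)
    (b : ℂ × ℂ → ℂ)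
    (hb : ∀ z : ℂ × ℂ, b z =
      MvPolynomial.eval ![z.1, z.2] pt / MvPolynomial.eval ![z.1, z.2] p)
    (hb_nc : ¬ ∃ c : ℂ, ∀ z ∈ bidisc, b z = c)
    (hb0 : b (0, 0) = 0)
    (hdec : ∃ (c : ℂ) (f g : ℂ → ℂ),
      DifferentiableOn ℂ f (Metric.ball (0 : ℂ) 1) ∧
      DifferentiableOn ℂ g (Metric.ball (0 : ℂ) 1) ∧
      f 0 = 0 ∧ g 0 = 0 ∧
      ∀ z ∈ bidisc, (1 - z.1 * z.2) / (1 - b z) = c + f z.1 + g z.2) :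
    ∃ a : ℂ, ‖a‖ ≤ 1 / 2 ∧
      ∀ z ∈ bidisc, b z =
        (z.1 * z.2 + a * z.1 + (starRingEnd ℂ) a * z.2) /
          (1 + a * z.1 + (starRingEnd ℂ) a * z.2) := by
  classical
  obtain ⟨c, f, g, hf, hg, hf0, hg0, hfg⟩ := hdec
  set P : ℂ × ℂ → ℂ := fun z => MvPolynomial.eval ![z.1, z.2] p with hPdef
  set Q : ℂ × ℂ → ℂ := fun z => MvPolynomial.eval ![z.1, z.2] pt with hQdef
  set E : ℂ × ℂ → ℂ := fun z => P z - Q z with hEdef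
  have hP : ∀ z ∈ bidisc, P z ≠ 0 := fun z hz => hp z hz
  have hbQP : ∀ z, b z = Q z / P z := fun z => hb z
  have h00 : ((0:ℂ),(0:ℂ)) ∈ bidisc := by constructor <;> simp
  have hP00 : P (0,0) ≠ 0 := hP _ h00
  have hQ00 : Q (0,0) = 0 := by
    have h := hb0
    rw [hbQP (0,0)] at h
    rcases div_eq_zero_iff.mp h with h' | h'
    · exact h'
    · exact absurd h' hP00
  have hE00 : E (0,0) ≠ 0 := by
    have : E (0,0) = P (0,0) := by
      show P (0,0) - Q (0,0) = P (0,0)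
      rw [hQ00]; ring
    rw [this]; exact hP00
  have hPa : AnalyticOnNhd ℂ P univ := evalAnalytic p
  have hQa : AnalyticOnNhd ℂ Q univ := evalAnalytic pt
  have hEa : AnalyticOnNhd ℂ E univ := hPa.sub hQa
  have hopen : IsOpen bidisc := by
    have h1 : IsOpen {z : ℂ × ℂ | ‖z.1‖ < 1} :=
      isOpen_lt (continuous_norm.comp continuous_fst) continuous_const
    have h2 : IsOpen {z : ℂ × ℂ | ‖z.2‖ < 1} :=
      isOpen_lt (continuous_norm.comp continuous_snd) continuous_const
    exact h1.inter h2
  have honemz : ∀ z : ℂ × ℂ, z ∈ bidisc → (1 : ℂ) - z.1 * z.2 ≠ 0 := by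
    rintro z ⟨h1, h2⟩ h0
    have he : z.1 * z.2 = 1 := by linear_combination -h0
    have := congrArg (‖·‖) he
    rw [norm_mul, norm_one] at this
    nlinarith [norm_nonneg z.1, norm_nonneg z.2]
  have hc : c = 1 := by
    have h := hfg (0,0) h00
    simp only [hb0] at h
    simp [hf0, hg0] at h
    linear_combination -h
  have hball : ∀ x : ℂ, ‖x‖ < 1 → x ∈ Metric.ball (0:ℂ) 1 := by
    intro x hx; simp [Metric.mem_ball, Complex.dist_eq, hx]
  -- The set where E does not vanish
  set S : Set (ℂ × ℂ) := {w | w ∈ bidisc ∧ E w ≠ 0} with hSdef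
  have hSsub : S ⊆ bidisc := fun w hw => hw.1
  have hhS : ∀ w ∈ S, (1 - w.1 * w.2) * P w = (1 + f w.1 + g w.2) * E w := by
    rintro w ⟨hw, hEw⟩
    have h := hfg w hw
    rw [hc] at h
    have hPw := hP w hw
    have h1b : 1 - b w = E w / P w := by
      rw [hbQP w, hEdef]
      field_simp
    have h1bne : 1 - b w ≠ 0 := by rw [h1b]; exact div_ne_zero hEw hPw
    rw [div_eq_iff h1bne] at h
    rw [h1b] at h
    field_simp at h
    linear_combination h
  have hclosure : ∀ z ∈ bidisc, z ∈ closure S := by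
    intro z hz
    by_contra hcl
    rw [Metric.mem_closure_iff] at hcl
    push_neg at hcl
    obtain ⟨ε, hε, hsep⟩ := hcl
    have hEzero : ∀ w ∈ Metric.ball z ε ∩ bidisc, E w = 0 := by
      rintro w ⟨hw1, hw2⟩
      by_contra hEw
      rw [Metric.mem_ball, dist_comm] at hw1
      exact absurd hw1 (not_lt.mpr (hsep w ⟨hw2, hEw⟩))
    have := entire_eq_zero E hEa (Metric.isOpen_ball.inter hopen)
      (⟨Metric.mem_ball_self hε, hz⟩) hEzero ((0:ℂ),(0:ℂ))
    exact hE00 this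
  have key1 : ∀ z ∈ bidisc, E z ≠ 0 ∧ (1 - z.1 * z.2) * P z = (1 + f z.1 + g z.2) * E z := by
    intro z hz
    set hfun : ℂ × ℂ → ℂ :=
      fun w => (1 - w.1 * w.2) * P w - (1 + f w.1 + g w.2) * E w with hfundef
    have hcont : ContinuousOn hfun bidisc := by
      apply ContinuousOn.sub
      · exact ((continuous_const.sub (continuous_fst.mul continuous_snd)).continuousOn).mul
          (hPa.continuousOn.mono (subset_univ _))
      · apply ContinuousOn.mul
        · refine (continuousOn_const.add ?_).add ?_
          · exact (hf.continuousOn).comp continuous_fst.continuousOn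
              (fun w hw => hball _ hw.1)
          · exact (hg.continuousOn).comp continuous_snd.continuousOn
              (fun w hw => hball _ hw.2)
        · exact hEa.continuousOn.mono (subset_univ _)
    have hzero : hfun z = 0 := by
      have hne : (𝓝[S] z).NeBot := mem_closure_iff_nhdsWithin_neBot.mp (hclosure z hz)
      have h1 : Tendsto hfun (𝓝[S] z) (𝓝 (hfun z)) := ((hcont z hz).mono hSsub).tendsto
      have h2 : Tendsto hfun (𝓝[S] z) (𝓝 0) := by
        refine Tendsto.congr' ?_ tendsto_const_nhds
        filter_upwards [self_mem_nhdsWithin] with w hw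
        have := hhS w hw
        rw [hfundef]
        simp only
        linear_combination -this
      exact tendsto_nhds_unique h1 h2
    have hiden : (1 - z.1 * z.2) * P z = (1 + f z.1 + g z.2) * E z := by
      have : hfun z = (1 - z.1 * z.2) * P z - (1 + f z.1 + g z.2) * E z := rfl
      rw [this] at hzero
      linear_combination hzero
    refine ⟨?_, hiden⟩
    intro hEz
    rw [hEz, mul_zero] at hiden
    exact (mul_ne_zero (honemz z hz) (hP z hz)) hiden
  -- one-variable slices
  set d1 : ℂ → ℂ := fun x => E (x, 0) with hd1def
  set d2 : ℂ → ℂ := fun x => E (0, x) with hd2def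
  set A : ℂ → ℂ := fun x => Q (x, 0) with hAdef
  set B : ℂ → ℂ := fun x => Q (0, x) with hBdef
  have hj1 : AnalyticOnNhd ℂ (fun x : ℂ => ((x, (0:ℂ)) : ℂ × ℂ)) univ :=
    analyticOnNhd_id.prod analyticOnNhd_const
  have hj2 : AnalyticOnNhd ℂ (fun x : ℂ => (((0:ℂ), x) : ℂ × ℂ)) univ :=
    analyticOnNhd_const.prod analyticOnNhd_id
  have hd1a : AnalyticOnNhd ℂ d1 univ := hEa.comp hj1 (mapsTo_univ _ _)
  have hd2a : AnalyticOnNhd ℂ d2 univ := hEa.comp hj2 (mapsTo_univ _ _)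
  have hAa : AnalyticOnNhd ℂ A univ := hQa.comp hj1 (mapsTo_univ _ _)
  have hBa : AnalyticOnNhd ℂ B univ := hQa.comp hj2 (mapsTo_univ _ _)
  have hmem1 : ∀ x : ℂ, ‖x‖ < 1 → ((x, (0:ℂ)) : ℂ × ℂ) ∈ bidisc :=
    fun x hx => ⟨by simpa, by simp⟩
  have hmem2 : ∀ x : ℂ, ‖x‖ < 1 → (((0:ℂ), x) : ℂ × ℂ) ∈ bidisc :=
    fun x hx => ⟨by simp, by simpa⟩
  have hd1ne : ∀ x : ℂ, ‖x‖ < 1 → d1 x ≠ 0 := fun x hx => (key1 _ (hmem1 x hx)).1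
  have hd2ne : ∀ x : ℂ, ‖x‖ < 1 → d2 x ≠ 0 := fun x hx => (key1 _ (hmem2 x hx)).1
  have hQPE : ∀ z : ℂ × ℂ, Q z = P z - E z := by
    intro z; show Q z = P z - (P z - Q z); ring
  have hfd1 : ∀ x : ℂ, ‖x‖ < 1 → f x * d1 x = A x := by
    intro x hx
    have h := (key1 _ (hmem1 x hx)).2
    simp only [hg0] at h
    have hQx : A x = P (x,0) - d1 x := hQPE (x, 0)
    rw [hQx]
    linear_combination -h
  have hgd2 : ∀ x : ℂ, ‖x‖ < 1 → g x * d2 x = B x := by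
    intro x hx
    have h := (key1 _ (hmem2 x hx)).2
    simp only [hf0] at h
    have hQx : B x = P (0,x) - d2 x := hQPE (0, x)
    rw [hQx]
    linear_combination -h
  -- the master identity, valid on all of ℂ²
  have star : ∀ z : ℂ × ℂ, (1 - z.1 * z.2) * P z * d1 z.1 * d2 z.2 =
      (d1 z.1 * d2 z.2 + A z.1 * d2 z.2 + B z.2 * d1 z.1) * E z := by
    have h1a : AnalyticOnNhd ℂ (fun z : ℂ × ℂ => d1 z.1) univ :=
      hd1a.comp analyticOnNhd_fst (mapsTo_univ _ _)
    have h2a : AnalyticOnNhd ℂ (fun z : ℂ × ℂ => d2 z.2) univ :=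
      hd2a.comp analyticOnNhd_snd (mapsTo_univ _ _)
    have h3a : AnalyticOnNhd ℂ (fun z : ℂ × ℂ => A z.1) univ :=
      hAa.comp analyticOnNhd_fst (mapsTo_univ _ _)
    have h4a : AnalyticOnNhd ℂ (fun z : ℂ × ℂ => B z.2) univ :=
      hBa.comp analyticOnNhd_snd (mapsTo_univ _ _)
    have hHa : AnalyticOnNhd ℂ (fun z : ℂ × ℂ =>
        (1 - z.1 * z.2) * P z * d1 z.1 * d2 z.2 -
        (d1 z.1 * d2 z.2 + A z.1 * d2 z.2 + B z.2 * d1 z.1) * E z) univ := by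
      exact ((((analyticOnNhd_const.sub (analyticOnNhd_fst.mul analyticOnNhd_snd)).mul
        hPa).mul h1a).mul h2a).sub
        ((((h1a.mul h2a).add (h3a.mul h2a)).add (h4a.mul h1a)).mul hEa)
    have hH0 : ∀ z ∈ bidisc, (1 - z.1 * z.2) * P z * d1 z.1 * d2 z.2 -
        (d1 z.1 * d2 z.2 + A z.1 * d2 z.2 + B z.2 * d1 z.1) * E z = 0 := by
      intro z hz
      have h := (key1 z hz).2
      have h1 := hfd1 z.1 hz.1
      have h2 := hgd2 z.2 hz.2
      linear_combination (d1 z.1 * d2 z.2) * h + (E z * d2 z.2) * h1 + (E z * d1 z.1) * h2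
    intro z
    have := entire_eq_zero _ hHa hopen h00 hH0 z
    linear_combination this
  -- reflected one-variable functions
  set m : ℕ := p.degreeOf 0 with hmdef
  set n : ℕ := p.degreeOf 1 with hndef
  set D1 : ℂ → ℂ := fun x => (starRingEnd ℂ) (d1 (((starRingEnd ℂ) x)⁻¹)) with hD1def
  set D2 : ℂ → ℂ := fun x => (starRingEnd ℂ) (d2 (((starRingEnd ℂ) x)⁻¹)) with hD2def
  set As : ℂ → ℂ := fun x => (starRingEnd ℂ) (A (((starRingEnd ℂ) x)⁻¹)) with hAsdef
  set Bs : ℂ → ℂ := fun x => (starRingEnd ℂ) (B (((starRingEnd ℂ) x)⁻¹)) with hBsdef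
  have hrefl : ∀ x y : ℂ, x ≠ 0 → y ≠ 0 →
      Q (x, y) = x ^ m * y ^ n *
        (starRingEnd ℂ) (P (((starRingEnd ℂ) x)⁻¹, ((starRingEnd ℂ) y)⁻¹)) :=
    fun x y hx hy => hpt (x, y) hx hy
  have star2 : ∀ x y : ℂ, x ≠ 0 → y ≠ 0 →
      (1 - x * y) * Q (x, y) * D1 x * D2 y =
        x * y * (D1 x * D2 y + As x * D2 y + Bs y * D1 x) * E (x, y) := by
    intro x y hx hy
    set w1 : ℂ := ((starRingEnd ℂ) x)⁻¹ with hw1def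
    set w2 : ℂ := ((starRingEnd ℂ) y)⁻¹ with hw2def
    have hw1 : w1 ≠ 0 := by simp [hw1def, hx]
    have hw2 : w2 ≠ 0 := by simp [hw2def, hy]
    have hcw1 : (starRingEnd ℂ) w1 = x⁻¹ := by rw [hw1def, map_inv₀, Complex.conj_conj]
    have hcw2 : (starRingEnd ℂ) w2 = y⁻¹ := by rw [hw2def, map_inv₀, Complex.conj_conj]
    have hS := star (w1, w2)
    simp only at hS
    -- conjugate it
    have hCS := congrArg (starRingEnd ℂ) hS
    simp only [map_mul, map_sub, map_add, map_one] at hCS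
    rw [hcw1, hcw2] at hCS
    -- identify the reflected pieces
    have e1 : (starRingEnd ℂ) (d1 w1) = D1 x := rfl
    have e2 : (starRingEnd ℂ) (d2 w2) = D2 y := rfl
    have e3 : (starRingEnd ℂ) (A w1) = As x := rfl
    have e4 : (starRingEnd ℂ) (B w2) = Bs y := rfl
    rw [e1, e2, e3, e4] at hCS
    -- the reflected values of P and Q
    have hα : Q (x, y) = x ^ m * y ^ n * (starRingEnd ℂ) (P (w1, w2)) := hrefl x y hx hy
    have hQw : Q (w1, w2) = w1 ^ m * w2 ^ n * (starRingEnd ℂ) (P (x, y)) := by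
      have := hrefl w1 w2 hw1 hw2
      rw [hcw1, hcw2, inv_inv, inv_inv] at this
      exact this
    have hEw : (starRingEnd ℂ) (E (w1, w2)) =
        (starRingEnd ℂ) (P (w1, w2)) - (x ^ m)⁻¹ * (y ^ n)⁻¹ * P (x, y) := by
      have hEPQ : E (w1, w2) = P (w1, w2) - Q (w1, w2) := rfl
      rw [hEPQ, map_sub, hQw]
      simp only [map_mul, map_pow, hcw1, hcw2, Complex.conj_conj]
      rw [inv_pow, inv_pow]
      try ring
    rw [hEw] at hCS
    -- now clear denominators and conclude
    have hEPQ : E (x, y) = P (x, y) - Q (x, y) := rfl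
    rw [hEPQ, hα]
    have hxm : (x : ℂ) ^ m ≠ 0 := pow_ne_zero _ hx
    have hyn : (y : ℂ) ^ n ≠ 0 := pow_ne_zero _ hy
    field_simp at hCS
    linear_combination -hCS
  have hD1ne : ∀ x : ℂ, d1 (((starRingEnd ℂ) x)⁻¹) ≠ 0 → D1 x ≠ 0 := by
    intro x hx
    simp only [hD1def, starRingEnd_apply]
    exact star_ne_zero.mpr hx
  have hD2ne : ∀ x : ℂ, d2 (((starRingEnd ℂ) x)⁻¹) ≠ 0 → D2 x ≠ 0 := by
    intro x hx
    simp only [hD2def, starRingEnd_apply]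
    exact star_ne_zero.mpr hx
  have hM : ∀ x y : ℂ, ‖x‖ < 1 → ‖y‖ < 1 → x ≠ 0 → y ≠ 0 →
      x * y * (d1 x * d2 y) * (As x * D2 y + Bs y * D1 x) =
        D1 x * D2 y * (A x * d2 y + B y * d1 x) := by
    intro x y hx1 hy1 hx0 hy0
    have hz : ((x, y) : ℂ × ℂ) ∈ bidisc := ⟨hx1, hy1⟩
    have hE := (key1 (x, y) hz).1
    have S1 := star (x, y)
    simp only at S1
    have S2 := star2 x y hx0 hy0
    have hEPQ : E (x, y) = P (x, y) - Q (x, y) := rfl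
    rw [hEPQ] at S1 S2
    have hE' : P (x, y) - Q (x, y) ≠ 0 := hE
    have hmul : (x * y * (d1 x * d2 y) * (As x * D2 y + Bs y * D1 x)) * (P (x, y) - Q (x, y)) =
        (D1 x * D2 y * (A x * d2 y + B y * d1 x)) * (P (x, y) - Q (x, y)) := by
      linear_combination (D1 x * D2 y) * S1 - (d1 x * d2 y) * S2
    exact mul_right_cancel₀ hE' hmul
  -- scalar form
  have hscalar : ∀ x y : ℂ, ‖x‖ < 1 → ‖y‖ < 1 → x ≠ 0 → y ≠ 0 →
      d1 (((starRingEnd ℂ) x)⁻¹) ≠ 0 → d2 (((starRingEnd ℂ) y)⁻¹) ≠ 0 →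
      x * y * (As x / D1 x + Bs y / D2 y) = f x + g y := by
    intro x y hx1 hy1 hx0 hy0 hxg hyg
    have hD1 : D1 x ≠ 0 := hD1ne x hxg
    have hD2 : D2 y ≠ 0 := hD2ne y hyg
    have hd1 : d1 x ≠ 0 := hd1ne x hx1
    have hd2 : d2 y ≠ 0 := hd2ne y hy1
    have h := hM x y hx1 hy1 hx0 hy0
    have hfx : f x = A x / d1 x := (eq_div_iff hd1).mpr (hfd1 x hx1)
    have hgy : g y = B y / d2 y := (eq_div_iff hd2).mpr (hgd2 y hy1)
    rw [hfx, hgy]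
    rw [div_add_div _ _ hD1 hD2, div_add_div _ _ hd1 hd2]
    rw [← mul_div_assoc, div_eq_div_iff (mul_ne_zero hD1 hD2) (mul_ne_zero hd1 hd2)]
    linear_combination h
  have hd1zero : d1 0 ≠ 0 := hE00
  have hd2zero : d2 0 ≠ 0 := hE00
  -- two good points for the second slot
  obtain ⟨s, hs_d, hs0, hsD⟩ := dense_good d2 hd2a hd2zero ((1:ℂ)/4) (1/8)
    (by norm_num)
  obtain ⟨t, ht_d, ht0, htD⟩ := dense_good d2 hd2a hd2zero ((3:ℂ)/4) (1/8)
    (by norm_num)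
  rw [Complex.dist_eq] at hs_d ht_d
  have habs14 : ‖((1:ℂ)/4)‖ = 1/4 := by norm_num [norm_div]
  have habs34 : ‖((3:ℂ)/4)‖ = 3/4 := by norm_num [norm_div]
  have habs_s : ‖s‖ < 3/8 := by
    calc ‖s‖ = ‖((s - (1:ℂ)/4) + (1:ℂ)/4)‖ := by congr 1; ring
      _ ≤ ‖(s - (1:ℂ)/4)‖ + ‖((1:ℂ)/4)‖ := norm_add_le _ _
      _ < 3/8 := by rw [habs14]; linarith
  have habs_s1 : ‖s‖ < 1 := by linarith
  have habs_t : 5/8 < ‖t‖ := by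
    have h1 : ‖((3:ℂ)/4)‖ ≤ ‖((3:ℂ)/4 - t)‖ + ‖t‖ := by
      calc ‖((3:ℂ)/4)‖ = ‖(((3:ℂ)/4 - t) + t)‖ := by congr 1; ring
        _ ≤ _ := norm_add_le _ _
    rw [habs34] at h1
    have h2 : ‖((3:ℂ)/4 - t)‖ < 1/8 := by
      rw [← norm_neg]; simpa [neg_sub] using ht_d
    linarith
  have habs_t1 : ‖t‖ < 1 := by
    calc ‖t‖ = ‖((t - (3:ℂ)/4) + (3:ℂ)/4)‖ := by congr 1; ring
      _ ≤ ‖(t - (3:ℂ)/4)‖ + ‖((3:ℂ)/4)‖ := norm_add_le _ _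
      _ < 1 := by rw [habs34]; linarith
  have hst : s ≠ t := by
    intro h; rw [h] at habs_s; linarith
  have hts : t - s ≠ 0 := sub_ne_zero.mpr (Ne.symm hst)
  set a : ℂ := (s * t * (Bs s / D2 s - Bs t / D2 t)) / (t - s) with hadef
  set β : ℂ := (s * g t - t * g s) / (t - s) with hβdef
  have hfgood : ∀ x : ℂ, ‖x‖ < 1 → x ≠ 0 → d1 (((starRingEnd ℂ) x)⁻¹) ≠ 0 →
      f x = a * x + β := by
    intro x hx1 hx0 hxg
    have e1 := hscalar x s hx1 habs_s1 hx0 hs0 hxg hsD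
    have e2 := hscalar x t hx1 habs_t1 hx0 ht0 hxg htD
    rw [hadef, hβdef, div_mul_eq_mul_div, ← add_div, eq_div_iff hts]
    linear_combination s * e2 - t * e1
  -- extension of the linearity to the whole disc
  have hG1cl : ∀ x : ℂ, ‖x‖ < 1 →
      x ∈ closure {x : ℂ | ‖x‖ < 1 ∧ x ≠ 0 ∧ d1 (((starRingEnd ℂ) x)⁻¹) ≠ 0} := by
    intro x hx
    rw [Metric.mem_closure_iff]
    intro ε hε
    obtain ⟨y, hyd, hy0, hyg⟩ := dense_good d1 hd1a hd1zero x (min ε (1 - ‖x‖))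
      (lt_min hε (by linarith))
    refine ⟨y, ⟨?_, hy0, hyg⟩, ?_⟩
    · have h1 : ‖(y - x)‖ < 1 - ‖x‖ := by
        rw [Complex.dist_eq] at hyd
        exact lt_of_lt_of_le hyd (min_le_right _ _)
      calc ‖y‖ = ‖((y - x) + x)‖ := by congr 1; ring
        _ ≤ ‖(y - x)‖ + ‖x‖ := norm_add_le _ _
        _ < 1 := by linarith
    · rw [dist_comm]; exact lt_of_lt_of_le hyd (min_le_left _ _)
  have hflin : ∀ x : ℂ, ‖x‖ < 1 → f x = a * x + β := by
    intro x hx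
    refine eq_on_of_dense hf.continuousOn
      ((continuous_const.mul continuous_id).add continuous_const)
      (fun y hy => hball y hy.1) ?_ (hball x hx) (hG1cl x hx)
    rintro y ⟨h1, h2, h3⟩
    exact hfgood y h1 h2 h3
  have hβ0 : β = 0 := by
    have h := hflin 0 (by simp)
    rw [hf0] at h
    simpa using h.symm
  have hflin' : ∀ x : ℂ, ‖x‖ < 1 → f x = a * x := by
    intro x hx; rw [hflin x hx, hβ0]; ring
  -- two good points for the first slot
  obtain ⟨s2, hs2_d, hs20, hs2D⟩ := dense_good d1 hd1a hd1zero ((1:ℂ)/4) (1/8)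
    (by norm_num)
  obtain ⟨t2, ht2_d, ht20, ht2D⟩ := dense_good d1 hd1a hd1zero ((3:ℂ)/4) (1/8)
    (by norm_num)
  rw [Complex.dist_eq] at hs2_d ht2_d
  have habs_s2 : ‖s2‖ < 3/8 := by
    calc ‖s2‖ = ‖((s2 - (1:ℂ)/4) + (1:ℂ)/4)‖ := by congr 1; ring
      _ ≤ ‖(s2 - (1:ℂ)/4)‖ + ‖((1:ℂ)/4)‖ := norm_add_le _ _
      _ < 3/8 := by rw [habs14]; linarith
  have habs_s21 : ‖s2‖ < 1 := by linarith
  have habs_t2 : 5/8 < ‖t2‖ := by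
    have h1 : ‖((3:ℂ)/4)‖ ≤ ‖((3:ℂ)/4 - t2)‖ + ‖t2‖ := by
      calc ‖((3:ℂ)/4)‖ = ‖(((3:ℂ)/4 - t2) + t2)‖ := by congr 1; ring
        _ ≤ _ := norm_add_le _ _
    rw [habs34] at h1
    have h2 : ‖((3:ℂ)/4 - t2)‖ < 1/8 := by
      rw [← norm_neg]; simpa [neg_sub] using ht2_d
    linarith
  have habs_t21 : ‖t2‖ < 1 := by
    calc ‖t2‖ = ‖((t2 - (3:ℂ)/4) + (3:ℂ)/4)‖ := by congr 1; ring
      _ ≤ ‖(t2 - (3:ℂ)/4)‖ + ‖((3:ℂ)/4)‖ := norm_add_le _ _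
      _ < 1 := by rw [habs34]; linarith
  have hst2 : s2 ≠ t2 := by
    intro h; rw [h] at habs_s2; linarith
  have hts2 : t2 - s2 ≠ 0 := sub_ne_zero.mpr (Ne.symm hst2)
  set e : ℂ := (s2 * t2 * (As s2 / D1 s2 - As t2 / D1 t2)) / (t2 - s2) with hedef
  set β2 : ℂ := (s2 * f t2 - t2 * f s2) / (t2 - s2) with hβ2def
  have hggood : ∀ y : ℂ, ‖y‖ < 1 → y ≠ 0 → d2 (((starRingEnd ℂ) y)⁻¹) ≠ 0 →
      g y = e * y + β2 := by
    intro y hy1 hy0 hyg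
    have e1 := hscalar s2 y habs_s21 hy1 hs20 hy0 hs2D hyg
    have e2 := hscalar t2 y habs_t21 hy1 ht20 hy0 ht2D hyg
    rw [hedef, hβ2def, div_mul_eq_mul_div, ← add_div, eq_div_iff hts2]
    linear_combination s2 * e2 - t2 * e1
  have hG2cl : ∀ y : ℂ, ‖y‖ < 1 →
      y ∈ closure {y : ℂ | ‖y‖ < 1 ∧ y ≠ 0 ∧ d2 (((starRingEnd ℂ) y)⁻¹) ≠ 0} := by
    intro y hy
    rw [Metric.mem_closure_iff]
    intro ε hε
    obtain ⟨w, hwd, hw0, hwg⟩ := dense_good d2 hd2a hd2zero y (min ε (1 - ‖y‖))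
      (lt_min hε (by linarith))
    refine ⟨w, ⟨?_, hw0, hwg⟩, ?_⟩
    · have h1 : ‖(w - y)‖ < 1 - ‖y‖ := by
        rw [Complex.dist_eq] at hwd
        exact lt_of_lt_of_le hwd (min_le_right _ _)
      calc ‖w‖ = ‖((w - y) + y)‖ := by congr 1; ring
        _ ≤ ‖(w - y)‖ + ‖y‖ := norm_add_le _ _
        _ < 1 := by linarith
    · rw [dist_comm]; exact lt_of_lt_of_le hwd (min_le_left _ _)
  have hglin : ∀ y : ℂ, ‖y‖ < 1 → g y = e * y + β2 := by
    intro y hy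
    refine eq_on_of_dense hg.continuousOn
      ((continuous_const.mul continuous_id).add continuous_const)
      (fun w hw => hball w hw.1) ?_ (hball y hy) (hG2cl y hy)
    rintro w ⟨h1, h2, h3⟩
    exact hggood w h1 h2 h3
  have hβ20 : β2 = 0 := by
    have h := hglin 0 (by simp)
    rw [hg0] at h
    simpa using h.symm
  have hglin' : ∀ y : ℂ, ‖y‖ < 1 → g y = e * y := by
    intro y hy; rw [hglin y hy, hβ20]; ring
  clear_value a β e β2
  -- A and B as entire functions
  have hA_lin : ∀ x : ℂ, A x = a * x * d1 x := by
    have hFa : AnalyticOnNhd ℂ (fun x : ℂ => A x - a * x * d1 x) univ :=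
      hAa.sub ((analyticOnNhd_const.mul analyticOnNhd_id).mul hd1a)
    have h0 : ∀ x ∈ Metric.ball (0:ℂ) 1, A x - a * x * d1 x = 0 := by
      intro x hx
      have hx1 : ‖x‖ < 1 := by
        rw [Metric.mem_ball, Complex.dist_eq, sub_zero] at hx; exact hx
      have h1 := hfd1 x hx1
      rw [hflin' x hx1] at h1
      linear_combination -h1
    have := entire_eq_zero _ hFa Metric.isOpen_ball (Metric.mem_ball_self one_pos) h0
    intro x
    have hx := this x
    linear_combination hx
  have hB_lin : ∀ y : ℂ, B y = e * y * d2 y := by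
    have hFa : AnalyticOnNhd ℂ (fun y : ℂ => B y - e * y * d2 y) univ :=
      hBa.sub ((analyticOnNhd_const.mul analyticOnNhd_id).mul hd2a)
    have h0 : ∀ y ∈ Metric.ball (0:ℂ) 1, B y - e * y * d2 y = 0 := by
      intro y hy
      have hy1 : ‖y‖ < 1 := by
        rw [Metric.mem_ball, Complex.dist_eq, sub_zero] at hy; exact hy
      have h1 := hgd2 y hy1
      rw [hglin' y hy1] at h1
      linear_combination -h1
    have := entire_eq_zero _ hFa Metric.isOpen_ball (Metric.mem_ball_self one_pos) h0
    intro y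
    have hy := this y
    linear_combination hy
  -- identify e with the conjugate of a
  have hAs : ∀ x : ℂ, As x = (starRingEnd ℂ) a * x⁻¹ * D1 x := by
    intro x
    show (starRingEnd ℂ) (A (((starRingEnd ℂ) x)⁻¹)) = _
    rw [hA_lin (((starRingEnd ℂ) x)⁻¹)]
    simp only [map_mul, map_inv₀, Complex.conj_conj]
    try rfl
  have hBs : ∀ y : ℂ, Bs y = (starRingEnd ℂ) e * y⁻¹ * D2 y := by
    intro y
    show (starRingEnd ℂ) (B (((starRingEnd ℂ) y)⁻¹)) = _
    rw [hB_lin (((starRingEnd ℂ) y)⁻¹)]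
    simp only [map_mul, map_inv₀, Complex.conj_conj]
    try rfl
  have hea : e = (starRingEnd ℂ) a := by
    have hD1s2 : D1 s2 ≠ 0 := hD1ne s2 hs2D
    have hD1t2 : D1 t2 ≠ 0 := hD1ne t2 ht2D
    have hD2s : D2 s ≠ 0 := hD2ne s hsD
    have e1 := hscalar s2 s habs_s21 habs_s1 hs20 hs0 hs2D hsD
    have e2 := hscalar t2 s habs_t21 habs_s1 ht20 hs0 ht2D hsD
    rw [hAs s2, hBs s, hflin' s2 habs_s21, hglin' s habs_s1,
      mul_div_assoc, mul_div_assoc, div_self hD1s2, div_self hD2s] at e1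
    rw [hAs t2, hBs s, hflin' t2 habs_t21, hglin' s habs_s1,
      mul_div_assoc, mul_div_assoc, div_self hD1t2, div_self hD2s] at e2
    have k1 : (starRingEnd ℂ) a * s + (starRingEnd ℂ) e * s2 = a * s2 + e * s := by
      field_simp at e1
      linear_combination e1
    have k2 : (starRingEnd ℂ) a * s + (starRingEnd ℂ) e * t2 = a * t2 + e * s := by
      field_simp at e2
      linear_combination e2
    have k3 : (starRingEnd ℂ) e * (s2 - t2) = a * (s2 - t2) := by
      linear_combination k1 - k2
    have k4 : (starRingEnd ℂ) e = a :=
      mul_right_cancel₀ (sub_ne_zero.mpr hst2) k3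
    have := congrArg (starRingEnd ℂ) k4
    rwa [Complex.conj_conj] at this
  -- the denominator does not vanish on the bidisc
  have hden : ∀ z ∈ bidisc, (1:ℂ) + a * z.1 + (starRingEnd ℂ) a * z.2 ≠ 0 := by
    intro z hz h0
    have h := (key1 z hz).2
    rw [hflin' z.1 hz.1, hglin' z.2 hz.2, hea] at h
    rw [h0, zero_mul] at h
    exact (mul_ne_zero (honemz z hz) (hP z hz)) h
  refine ⟨a, ?_, ?_⟩
  · -- |a| ≤ 1/2
    by_contra hgt
    push_neg at hgt
    have ha0 : a ≠ 0 := by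
      intro h; rw [h, norm_zero] at hgt; linarith
    have hca0 : (starRingEnd ℂ) a ≠ 0 := by
      rw [starRingEnd_apply, star_ne_zero]; exact ha0
    have habsa : 0 < ‖a‖ := norm_pos_iff.mpr ha0
    set z : ℂ × ℂ := (-(2*a)⁻¹, -(2*(starRingEnd ℂ) a)⁻¹) with hzdef
    have hz1 : ‖z.1‖ < 1 := by
      show ‖(-(2*a)⁻¹)‖ < 1
      rw [norm_neg, norm_inv, norm_mul, Complex.norm_two]
      rw [inv_lt_one_iff₀]
      right; linarith
    have hz2 : ‖z.2‖ < 1 := by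
      show ‖(-(2*(starRingEnd ℂ) a)⁻¹)‖ < 1
      rw [norm_neg, norm_inv, norm_mul, Complex.norm_two, Complex.norm_conj]
      rw [inv_lt_one_iff₀]
      right; linarith
    have hzmem : z ∈ bidisc := ⟨hz1, hz2⟩
    apply hden z hzmem
    show (1:ℂ) + a * (-(2*a)⁻¹) + (starRingEnd ℂ) a * (-(2*(starRingEnd ℂ) a)⁻¹) = 0
    field_simp
    ring
  · -- the formula for b
    intro z hz
    have hkey := (key1 z hz).2
    rw [hflin' z.1 hz.1, hglin' z.2 hz.2, hea] at hkey
    have hden' := hden z hz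
    rw [hbQP z, div_eq_div_iff (hP z hz) hden']
    have hEPQ : E z = P z - Q z := rfl
    rw [hEPQ] at hkey
    linear_combination hkey
end
end

section
/- In the polynomial ring C[X,Y], the ideal generated by p_2 = 2 - X*Y - X^2*Y and p_2~ = 2*X^2*Y - X - 1 is equal to the ideal generated by (X-1)^2 and 3*X + 2*Y - 5. -/
open MeasureTheory Complex Set Filter Topology MvPolynomial

noncomputable section

lemma half_mem_span {a b f : MvPolynomial (Fin 2) ℂ} (u v : MvPolynomial (Fin 2) ℂ)
    (h : u * a + v * b = 2 * f) : f ∈ Ideal.span ({a, b} : Set (MvPolynomial (Fin 2) ℂ)) := by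
  have hf : f = (C (1/2 : ℂ) * u) * a + (C (1/2 : ℂ) * v) * b := by
    have h2 : (C (1/2 : ℂ) : MvPolynomial (Fin 2) ℂ) * 2 = 1 := by
      have : (2 : MvPolynomial (Fin 2) ℂ) = C (2 : ℂ) := by
        simp [map_ofNat]
      rw [this, ← map_mul]
      norm_num
    calc f = 1 * f := (one_mul f).symm
    _ = (C (1/2 : ℂ) * 2) * f := by rw [h2]
    _ = C (1/2 : ℂ) * (2 * f) := by ring
    _ = C (1/2 : ℂ) * (u * a + v * b) := by rw [h]
    _ = (C (1/2 : ℂ) * u) * a + (C (1/2 : ℂ) * v) * b := by ring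
  rw [hf]
  exact Ideal.add_mem _
    (Ideal.mul_mem_left _ _ (Ideal.subset_span (Set.mem_insert _ _)))
    (Ideal.mul_mem_left _ _ (Ideal.subset_span (Set.mem_insert_of_mem _ rfl)))

theorem ideal_p2_pt2_eq :
    Ideal.span ({2 - X 0 * X 1 - X 0 ^ 2 * X 1,
        2 * X 0 ^ 2 * X 1 - X 0 - 1} : Set (MvPolynomial (Fin 2) ℂ)) =
      Ideal.span ({(X 0 - 1) ^ 2, 3 * X 0 + 2 * X 1 - 5} :
        Set (MvPolynomial (Fin 2) ℂ)) := by
  apply le_antisymm <;>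
    rw [Ideal.span_le, Set.insert_subset_iff, Set.singleton_subset_iff]
  · constructor
    · -- p ∈ span {a, b}
      exact half_mem_span (3 * X 0 + 4) (-(X 0 + X 0 ^ 2)) (by ring)
    · -- q ∈ span {a, b}
      exact half_mem_span (-6 * X 0 - 2) (2 * X 0 ^ 2) (by ring)
  · constructor
    · -- a ∈ span {p, q}
      exact half_mem_span (-4 * X 0) (-(2 + 2 * X 0)) (by ring)
    · -- b ∈ span {p, q}
      exact half_mem_span (-8 * X 0 * X 1 - 8) (-6 - 4 * X 1 - 4 * X 0 * X 1) (by ring)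
end
end

section
/- In the polynomial ring C[X,Y], the polynomial p_1 = 4 - Y - 3*X - X*Y + X^2 does not belong to the ideal generated by p_2 = 2 - X*Y - X^2*Y and p_2~ = 2*X^2*Y - X - 1. -/
open MeasureTheory Complex Set Filter Topology MvPolynomial

noncomputable section

lemma pderiv_two_aux (i : Fin 2) : pderiv i (2 : MvPolynomial (Fin 2) ℂ) = 0 := by
  rw [← map_ofNat (C : ℂ →+* MvPolynomial (Fin 2) ℂ) 2, pderiv_C]
lemma pderiv_three_aux (i : Fin 2) : pderiv i (3 : MvPolynomial (Fin 2) ℂ) = 0 := by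
  rw [← map_ofNat (C : ℂ →+* MvPolynomial (Fin 2) ℂ) 3, pderiv_C]
lemma pderiv_four_aux (i : Fin 2) : pderiv i (4 : MvPolynomial (Fin 2) ℂ) = 0 := by
  rw [← map_ofNat (C : ℂ →+* MvPolynomial (Fin 2) ℂ) 4, pderiv_C]

theorem p1_not_in_ideal_p2_pt2 :
    (4 - X 1 - 3 * X 0 - X 0 * X 1 + X 0 ^ 2 : MvPolynomial (Fin 2) ℂ) ∉
      Ideal.span ({2 - X 0 * X 1 - X 0 ^ 2 * X 1,
        2 * X 0 ^ 2 * X 1 - X 0 - 1} : Set (MvPolynomial (Fin 2) ℂ)) := by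
  intro h
  set ev : MvPolynomial (Fin 2) ℂ →+* ℂ := eval (fun _ : Fin 2 => (1:ℂ)) with hev
  have key : ∀ g ∈ Ideal.span ({2 - X 0 * X 1 - X 0 ^ 2 * X 1,
        2 * X 0 ^ 2 * X 1 - X 0 - 1} : Set (MvPolynomial (Fin 2) ℂ)),
      ev g = 0 ∧ 2 * ev (pderiv 0 g) - 3 * ev (pderiv 1 g) = 0 := by
    intro g hg
    refine Submodule.span_induction ?_ ?_ ?_ ?_ hg
    · rintro p (rfl | rfl) <;>
        constructor <;>
        simp [hev, pderiv_mul, pderiv_X, Pi.single_apply, pderiv_two_aux, pderiv_three_aux, pderiv_four_aux] <;> ring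
    · simp
    · rintro x y - - ⟨hx1, hx2⟩ ⟨hy1, hy2⟩
      constructor <;> simp [map_add, hx1, hy1] <;> linear_combination hx2 + hy2
    · rintro r x - ⟨hx1, hx2⟩
      constructor
      · simp [smul_eq_mul, map_mul, hx1]
      · simp only [smul_eq_mul, pderiv_mul, map_add, map_mul, hx1]
        ring_nf
        linear_combination ev r * hx2
  obtain ⟨h1, h2⟩ := key _ h
  simp [hev, pderiv_mul, pderiv_X, Pi.single_apply, pderiv_two_aux, pderiv_three_aux, pderiv_four_aux] at h2
  norm_num at h2
end
end

section
/- Let alpha be a unimodular complex number and let mu be a complex Borel measure on T^2 such that the integral over T^2 of zeta_1^{k_1}*zeta_2^{k_2} dmu(zeta) equals 0 for every pair of nonnegative integers (k_1,k_2) (i.e. mu annihilates the bidisc algebra A(D^2)). Then the total variation |mu| of the anti-diagonal line {(zeta_1,zeta_2) in T^2 : zeta_1*zeta_2 = alpha} is zero. -/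
open MeasureTheory Complex Set Filter Topology MvPolynomial
open scoped ENNReal NNReal

noncomputable section

/- ### Auxiliary material for the proof -/

lemma meas_torus2 : MeasurableSet torus2 := by
  have : torus2 = {z : ℂ × ℂ | ‖z.1‖ = 1} ∩ {z : ℂ × ℂ | ‖z.2‖ = 1} := rfl
  rw [this]
  exact ((isClosed_eq (continuous_norm.comp continuous_fst) continuous_const).inter
    (isClosed_eq (continuous_norm.comp continuous_snd) continuous_const)).measurableSet

lemma meas_S (α : ℂ) : MeasurableSet ({z : ℂ × ℂ | z.1 * z.2 = α} ∩ torus2) :=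
  ((isClosed_eq (continuous_fst.mul continuous_snd) continuous_const).measurableSet).inter
    meas_torus2

lemma key_lt {w : ℂ} (hw : ‖w‖ = 1) (hne : w ≠ 1) : ‖(1 + w) / 2‖ < 1 := by
  have hre : w.re < 1 := by
    rcases lt_or_eq_of_le (Complex.re_le_norm w) with h | h
    · rwa [hw] at h
    · exfalso
      apply hne
      have hn : Complex.normSq w = 1 := by rw [Complex.normSq_eq_norm_sq, hw]; norm_num
      have hre1 : w.re = 1 := by rw [h, hw]
      have him : w.im = 0 := by
        have := Complex.normSq_apply w
        nlinarith
      exact Complex.ext hre1 (by simpa using him)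
  have hn : Complex.normSq w = 1 := by rw [Complex.normSq_eq_norm_sq, hw]; norm_num
  have h2 : Complex.normSq (1 + w) < 4 := by
    rw [Complex.normSq_add]
    have h4 : (1 * (starRingEnd ℂ) w).re = w.re := by simp [Complex.conj_re]
    rw [h4]
    simp only [Complex.normSq_one, hn]
    linarith
  have h3 : ‖1 + w‖ < 2 := by
    have := Complex.sq_norm (1 + w)
    nlinarith [norm_nonneg (1 + w)]
  rw [norm_div]
  have h5 : ‖(2:ℂ)‖ = 2 := by norm_num
  rw [h5]
  linarith

/-- Step 1: the restriction of the annihilating measure to the anti-diagonal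
still annihilates all holomorphic monomials. -/
lemma step1 (α : ℂ) (hα : ‖α‖ = 1)
    (ρ : Measure (ℂ × ℂ)) (hρcar : ρ torus2ᶜ = 0)
    (f : ℂ × ℂ → ℂ) (hf : Integrable f ρ)
    (hmom : ∀ k₁ k₂ : ℕ, ∫ ζ, ζ.1 ^ k₁ * ζ.2 ^ k₂ * f ζ ∂ρ = 0) (k₁ k₂ : ℕ) :
    ∫ ζ in {z : ℂ × ℂ | z.1 * z.2 = α} ∩ torus2, ζ.1 ^ k₁ * ζ.2 ^ k₂ * f ζ ∂ρ = 0 := by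
  set c : ℂ := starRingEnd ℂ α with hc
  have hae : ∀ᵐ ζ ∂ρ, ζ ∈ torus2 := by
    rw [ae_iff]
    convert hρcar using 2
    rfl
  have hmono : ∀ a b : ℕ, Integrable (fun ζ : ℂ × ℂ => ζ.1 ^ a * ζ.2 ^ b * f ζ) ρ := by
    intro a b
    refine Integrable.mono' hf.norm
      (((continuous_fst.pow a).mul (continuous_snd.pow b)).aestronglyMeasurable.mul hf.1) ?_
    filter_upwards [hae] with ζ hζ
    have h1 : ‖ζ.1‖ = 1 := hζ.1
    have h2 : ‖ζ.2‖ = 1 := hζ.2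
    refine le_of_eq ?_
    calc ‖ζ.1 ^ a * ζ.2 ^ b * f ζ‖ = ‖ζ.1‖ ^ a * ‖ζ.2‖ ^ b * ‖f ζ‖ := by
          simp [map_mul, map_pow]
      _ = ‖f ζ‖ := by rw [h1, h2]; ring
  set F : ℕ → (ℂ × ℂ) → ℂ :=
    fun n ζ => ((1 + c * (ζ.1 * ζ.2)) / 2) ^ n * (ζ.1 ^ k₁ * ζ.2 ^ k₂ * f ζ) with hF
  have hFint : ∀ n, ∫ ζ, F n ζ ∂ρ = 0 := by
    intro n
    have expand : ∀ ζ : ℂ × ℂ, F n ζ =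
        ∑ j ∈ Finset.range (n + 1),
          ((n.choose j : ℂ) * c ^ j / 2 ^ n) * (ζ.1 ^ (j + k₁) * ζ.2 ^ (j + k₂) * f ζ) := by
      intro ζ
      simp only [hF]
      rw [add_comm (1 : ℂ) (c * (ζ.1 * ζ.2)), div_pow, add_pow, Finset.sum_div,
        Finset.sum_mul]
      refine Finset.sum_congr rfl fun j hj => ?_
      rw [pow_add, pow_add]
      ring
    rw [integral_congr_ae (Eventually.of_forall expand), integral_finset_sum]
    · refine Finset.sum_eq_zero fun j hj => ?_
      rw [integral_const_mul, hmom (j + k₁) (j + k₂), mul_zero]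
    · intro j hj
      exact (hmono (j + k₁) (j + k₂)).const_mul _
  have htend : Tendsto (fun n => ∫ ζ, F n ζ ∂ρ) atTop
      (𝓝 (∫ ζ, Set.indicator ({z : ℂ × ℂ | z.1 * z.2 = α} ∩ torus2)
        (fun ζ => ζ.1 ^ k₁ * ζ.2 ^ k₂ * f ζ) ζ ∂ρ)) := by
    refine tendsto_integral_of_dominated_convergence (fun ζ => ‖f ζ‖) ?_ hf.norm ?_ ?_
    · intro n
      exact ((((continuous_const.add (continuous_const.mul
        (continuous_fst.mul continuous_snd))).div_const 2).pow n).aestronglyMeasurable).mul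
        (hmono k₁ k₂).1
    · intro n
      filter_upwards [hae] with ζ hζ
      have h1 : ‖ζ.1‖ = 1 := hζ.1
      have h2 : ‖ζ.2‖ = 1 := hζ.2
      have hb : ‖((1 + c * (ζ.1 * ζ.2)) / 2) ^ n‖ ≤ 1 := by
        rw [norm_pow]
        apply pow_le_one₀ (norm_nonneg _)
        rw [norm_div]
        have h6 : ‖(2:ℂ)‖ = 2 := by norm_num
        rw [h6]
        have : ‖(1 : ℂ) + c * (ζ.1 * ζ.2)‖ ≤ 2 := by
          have e : ‖c * (ζ.1 * ζ.2)‖ = 1 := by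
            simp [map_mul, hc, h1, h2, hα]
          calc ‖(1:ℂ) + c * (ζ.1 * ζ.2)‖ ≤ ‖(1:ℂ)‖ + ‖c * (ζ.1 * ζ.2)‖ := norm_add_le _ _
            _ ≤ 2 := by rw [e]; norm_num
        linarith
      calc ‖F n ζ‖ = ‖((1 + c * (ζ.1 * ζ.2)) / 2) ^ n‖ * ‖ζ.1 ^ k₁ * ζ.2 ^ k₂ * f ζ‖ := by
            rw [hF]; exact norm_mul _ _
        _ ≤ 1 * (1 * ‖f ζ‖) := by
            apply mul_le_mul hb ?_ (norm_nonneg _) zero_le_one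
            refine le_of_eq ?_
            calc ‖ζ.1 ^ k₁ * ζ.2 ^ k₂ * f ζ‖
                = ‖ζ.1‖ ^ k₁ * ‖ζ.2‖ ^ k₂ * ‖f ζ‖ := by
                  simp [map_mul, map_pow]
              _ = 1 * ‖f ζ‖ := by rw [h1, h2]; ring
        _ = ‖f ζ‖ := by ring
    · filter_upwards [hae] with ζ hζ
      by_cases hmem : ζ.1 * ζ.2 = α
      · have hin : ζ ∈ {z : ℂ × ℂ | z.1 * z.2 = α} ∩ torus2 := ⟨hmem, hζ⟩
        rw [Set.indicator_of_mem hin]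
        have hone : c * (ζ.1 * ζ.2) = 1 := by
          rw [hmem, hc, mul_comm, Complex.mul_conj, Complex.normSq_eq_norm_sq, hα]
          norm_num
        have heq : ∀ n, F n ζ = ζ.1 ^ k₁ * ζ.2 ^ k₂ * f ζ := by
          intro n
          rw [hF]
          simp [hone]
        simp only [heq]
        exact tendsto_const_nhds
      · have hnin : ζ ∉ {z : ℂ × ℂ | z.1 * z.2 = α} ∩ torus2 := fun h => hmem h.1
        rw [Set.indicator_of_notMem hnin]
        have habs : ‖c * (ζ.1 * ζ.2)‖ = 1 := by
          simp [hc, map_mul, hζ.1, hζ.2, hα]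
        have hne : c * (ζ.1 * ζ.2) ≠ 1 := by
          intro h
          apply hmem
          have h7 : α * (c * (ζ.1 * ζ.2)) = α * 1 := by rw [h]
          rw [hc, ← mul_assoc, Complex.mul_conj, Complex.normSq_eq_norm_sq, hα] at h7
          simpa using h7
        have hlt : ‖(1 + c * (ζ.1 * ζ.2)) / 2‖ < 1 := key_lt habs hne
        have h0 : Tendsto (fun n => ((1 + c * (ζ.1 * ζ.2)) / 2) ^ n) atTop (𝓝 0) :=
          tendsto_pow_atTop_nhds_zero_of_norm_lt_one hlt
        have h8 := h0.mul_const (ζ.1 ^ k₁ * ζ.2 ^ k₂ * f ζ)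
        rw [zero_mul] at h8
        exact h8
  have hzero : Tendsto (fun n => ∫ ζ, F n ζ ∂ρ) atTop (𝓝 (0:ℂ)) := by
    simp only [hFint]
    exact tendsto_const_nhds
  have hval := tendsto_nhds_unique htend hzero
  rw [← integral_indicator (meas_S α)]
  exact hval

/- ### The unit circle and extension of continuous functions on it -/

abbrev sph : Set ℂ := Metric.sphere 0 1

def Xs : C(sph, ℂ) := ⟨fun z => (z : ℂ), continuous_subtype_val⟩

open scoped Classical in
def ext' (φ : C(sph, ℂ)) (z : ℂ) : ℂ := if h : z ∈ sph then φ ⟨z, h⟩ else 0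

lemma mem_sph {z : ℂ} (h : ‖z‖ = 1) : z ∈ sph := by
  rw [mem_sphere_zero_iff_norm, h]

lemma measurable_ext' (φ : C(sph, ℂ)) : Measurable (ext' φ) := by
  classical
  exact Measurable.dite φ.continuous.measurable measurable_const
    Metric.isClosed_sphere.measurableSet

lemma ext'_norm_le (φ : C(sph, ℂ)) (z : ℂ) : ‖ext' φ z‖ ≤ ‖φ‖ := by
  unfold ext'
  split
  · exact φ.norm_coe_le_norm _
  · simp

lemma ext'_sub (φ ψ : C(sph, ℂ)) (z : ℂ) : ext' (φ - ψ) z = ext' φ z - ext' ψ z := by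
  unfold ext'; split <;> simp

lemma ext'_add (φ ψ : C(sph, ℂ)) (z : ℂ) : ext' (φ + ψ) z = ext' φ z + ext' ψ z := by
  unfold ext'; split <;> simp

lemma ext'_smul (c : ℂ) (φ : C(sph, ℂ)) (z : ℂ) : ext' (c • φ) z = c * ext' φ z := by
  unfold ext'; split <;> simp

lemma ext'_zero (z : ℂ) : ext' (0 : C(sph, ℂ)) z = 0 := by
  unfold ext'; split <;> simp

lemma ext'_monomial (a b : ℕ) (z : ℂ) (h : z ∈ sph) :
    ext' (Xs ^ a * (star Xs) ^ b) z = z ^ a * (starRingEnd ℂ z) ^ b := by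
  unfold ext'
  rw [dif_pos h]
  rw [ContinuousMap.mul_apply, ContinuousMap.pow_apply, ContinuousMap.pow_apply,
    ContinuousMap.star_apply]
  rfl

def Mset : Set C(sph, ℂ) := Set.range (fun n : ℕ × ℕ => Xs ^ n.1 * (star Xs) ^ n.2)

lemma adjoin_le_span :
    ((StarAlgebra.adjoin ℂ {Xs} : StarSubalgebra ℂ C(sph, ℂ)) : Set C(sph, ℂ)) ⊆
      (Submodule.span ℂ Mset : Submodule ℂ C(sph, ℂ)) := by
  intro p hp
  have hmul : ∀ x ∈ Submodule.span ℂ Mset, ∀ y ∈ Submodule.span ℂ Mset,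
      x * y ∈ Submodule.span ℂ Mset := by
    have hM : ∀ m ∈ Mset, ∀ y ∈ Submodule.span ℂ Mset, m * y ∈ Submodule.span ℂ Mset := by
      rintro m ⟨⟨a, b⟩, rfl⟩ y hy
      refine Submodule.span_induction ?_ ?_ ?_ ?_ hy
      · rintro z ⟨⟨a', b'⟩, rfl⟩
        apply Submodule.subset_span
        refine ⟨(a + a', b + b'), ?_⟩
        simp only [pow_add]
        ring
      · simp
      · intro x y _ _ hx hy
        rw [mul_add]
        exact Submodule.add_mem _ hx hy
      · intro c x _ hx
        rw [mul_smul_comm]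
        exact Submodule.smul_mem _ _ hx
    intro x hx
    refine Submodule.span_induction ?_ ?_ ?_ ?_ hx
    · exact fun m hm => hM m hm
    · intro y _; simp
    · intro x₁ x₂ _ _ h₁ h₂ y hy
      rw [add_mul]
      exact Submodule.add_mem _ (h₁ y hy) (h₂ y hy)
    · intro c x _ h y hy
      rw [smul_mul_assoc]
      exact Submodule.smul_mem _ _ (h y hy)
  induction hp using StarAlgebra.adjoin_induction with
  | mem x hx =>
      rw [Set.mem_singleton_iff] at hx
      subst hx
      apply Submodule.subset_span
      exact ⟨(1, 0), by simp⟩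
  | algebraMap r =>
      rw [Algebra.algebraMap_eq_smul_one]
      refine Submodule.smul_mem _ _ (Submodule.subset_span ⟨(0, 0), by simp⟩)
  | add x y hx hy ihx ihy => exact Submodule.add_mem _ ihx ihy
  | mul x y hx hy ihx ihy => exact hmul x ihx y ihy
  | star x hx ihx =>
      refine Submodule.span_induction ?_ ?_ ?_ ?_ ihx
      · rintro z ⟨⟨a, b⟩, rfl⟩
        apply Submodule.subset_span
        refine ⟨(b, a), ?_⟩
        simp only [star_mul, star_pow, star_star]
      · simp
      · intro x y _ _ hx hy
        rw [star_add]
        exact Submodule.add_mem _ hx hy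
      · intro c x _ hx
        rw [star_smul]
        exact Submodule.smul_mem _ _ hx

lemma sph_dense : (StarAlgebra.adjoin ℂ ({Xs} : Set C(sph, ℂ))).topologicalClosure = ⊤ := by
  apply ContinuousMap.starSubalgebra_topologicalClosure_eq_top_of_separatesPoints
  intro x y hxy
  exact ⟨Xs, ⟨Xs, StarAlgebra.subset_adjoin ℂ _ (Set.mem_singleton _), rfl⟩,
    Subtype.coe_injective.ne hxy⟩

set_option maxHeartbeats 2000000 in
theorem antidiagonal_is_null_for_annihilators
    (α : ℂ) (hα : ‖α‖ = 1)
    -- μ = f dρ is a complex Borel measure on T² annihilating A(D²)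
    (ρ : Measure (ℂ × ℂ)) (hρfin : IsFiniteMeasure ρ) (hρcar : ρ torus2ᶜ = 0)
    (f : ℂ × ℂ → ℂ) (hf : Integrable f ρ)
    (hmom : ∀ k₁ k₂ : ℕ, ∫ ζ, ζ.1 ^ k₁ * ζ.2 ^ k₂ * f ζ ∂ρ = 0) :
    -- the total variation of the anti-diagonal line is zero
    ∫⁻ ζ in {z : ℂ × ℂ | z.1 * z.2 = α} ∩ torus2, ‖f ζ‖₊ ∂ρ = 0 := by
  classical
  set A : Set (ℂ × ℂ) := {z : ℂ × ℂ | z.1 * z.2 = α} ∩ torus2 with hAdef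
  have measA : MeasurableSet A := meas_S α
  set μ' : Measure (ℂ × ℂ) := ρ.restrict A with hμ'
  have hf' : Integrable f μ' := hf.restrict
  have haeA : ∀ᵐ ζ ∂μ', ζ ∈ A := ae_restrict_mem measA
  have hz1s : ∀ ζ : ℂ × ℂ, ζ ∈ A → ζ.1 ∈ sph := fun ζ hζ => mem_sph hζ.2.1
  have hz2 : ∀ ζ : ℂ × ℂ, ζ ∈ A → ζ.2 = α * starRingEnd ℂ ζ.1 := by
    intro ζ hζ
    have h1 : ζ.1 * ζ.2 = α := hζ.1
    have habs : ‖ζ.1‖ = 1 := hζ.2.1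
    have hcc : ζ.1 * starRingEnd ℂ ζ.1 = 1 := by
      rw [Complex.mul_conj, Complex.normSq_eq_norm_sq, habs]
      norm_num
    calc ζ.2 = (ζ.1 * starRingEnd ℂ ζ.1) * ζ.2 := by rw [hcc, one_mul]
      _ = (ζ.1 * ζ.2) * starRingEnd ℂ ζ.1 := by ring
      _ = α * starRingEnd ℂ ζ.1 := by rw [h1]
  -- Step 2: conjugate moments vanish on the anti-diagonal
  have step2 : ∀ a b : ℕ, ∫ ζ, ζ.1 ^ a * (starRingEnd ℂ ζ.1) ^ b * f ζ ∂μ' = 0 := by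
    intro a b
    have h1 := step1 α hα ρ hρcar f hf hmom a b
    have congr1 : ∫ ζ in A, ζ.1 ^ a * ζ.2 ^ b * f ζ ∂ρ =
        ∫ ζ, α ^ b * (ζ.1 ^ a * (starRingEnd ℂ ζ.1) ^ b * f ζ) ∂μ' := by
      refine integral_congr_ae ?_
      filter_upwards [haeA] with ζ hζ
      rw [hz2 ζ hζ, mul_pow]
      ring
    rw [← hAdef] at h1
    rw [congr1, integral_const_mul] at h1
    have hαne : (α : ℂ) ^ b ≠ 0 := by
      apply pow_ne_zero
      intro h
      rw [h] at hα
      simp at hα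
    exact (mul_eq_zero.mp h1).resolve_left hαne
  -- Integrability of extended continuous functions against f dμ'
  have hext_int : ∀ φ : C(sph, ℂ), Integrable (fun ζ : ℂ × ℂ => ext' φ ζ.1 * f ζ) μ' := by
    intro φ
    refine Integrable.mono' (hf'.norm.const_mul ‖φ‖)
      (((measurable_ext' φ).comp measurable_fst).aestronglyMeasurable.mul hf'.1) ?_
    refine Eventually.of_forall fun ζ => ?_
    rw [norm_mul]
    exact mul_le_mul_of_nonneg_right (ext'_norm_le φ _) (norm_nonneg _)
  -- vanishing against monomials
  have hmono_P : ∀ m ∈ Mset, ∫ ζ, ext' m ζ.1 * f ζ ∂μ' = 0 := by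
    rintro m ⟨⟨a, b⟩, rfl⟩
    rw [← step2 a b]
    refine integral_congr_ae ?_
    filter_upwards [haeA] with ζ hζ
    rw [ext'_monomial a b ζ.1 (hz1s ζ hζ)]
  -- vanishing against the span of monomials
  have hspan_P : ∀ p ∈ Submodule.span ℂ Mset, ∫ ζ, ext' p ζ.1 * f ζ ∂μ' = 0 := by
    intro p hp
    refine Submodule.span_induction hmono_P ?_ ?_ ?_ hp
    · simp only [ext'_zero, zero_mul, integral_zero]
    · intro x y _ _ ihx ihy
      have heq : (fun ζ : ℂ × ℂ => ext' (x + y) ζ.1 * f ζ) =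
          fun ζ => ext' x ζ.1 * f ζ + ext' y ζ.1 * f ζ := by
        funext ζ
        rw [ext'_add]
        ring
      rw [heq, integral_add (hext_int x) (hext_int y), ihx, ihy, add_zero]
    · intro c x _ ihx
      have heq : (fun ζ : ℂ × ℂ => ext' (c • x) ζ.1 * f ζ) =
          fun ζ => c * (ext' x ζ.1 * f ζ) := by
        funext ζ
        rw [ext'_smul]
        ring
      rw [heq, integral_const_mul, ihx, mul_zero]
  have hadj_P : ∀ p ∈ StarAlgebra.adjoin ℂ ({Xs} : Set C(sph, ℂ)),
      ∫ ζ, ext' p ζ.1 * f ζ ∂μ' = 0 :=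
    fun p hp => hspan_P p (adjoin_le_span hp)
  -- f vanishes a.e. on the anti-diagonal
  have hfzero : ∀ᵐ ζ ∂μ', f ζ = 0 := by
    apply ae_eq_zero_of_integral_contDiff_smul_eq_zero hf'.locallyIntegrable
    intro g hg hgsupp
    set G : C(sph, ℂ) := ⟨fun z => ((g ((z : ℂ), α * star (z : ℂ)) : ℝ) : ℂ),
      Complex.continuous_ofReal.comp (hg.continuous.comp (continuous_subtype_val.prodMk
        (continuous_const.mul (continuous_star.comp continuous_subtype_val))))⟩ with hG
    have hGmem : G ∈ closure
        ((StarAlgebra.adjoin ℂ ({Xs} : Set C(sph, ℂ)) : StarSubalgebra ℂ C(sph, ℂ)) :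
          Set C(sph, ℂ)) := by
      have : G ∈ (StarAlgebra.adjoin ℂ ({Xs} : Set C(sph, ℂ))).topologicalClosure := by
        rw [sph_dense]
        trivial
      exact this
    have e1 : ∫ ζ, g ζ • f ζ ∂μ' = ∫ ζ, ext' G ζ.1 * f ζ ∂μ' := by
      refine integral_congr_ae ?_
      filter_upwards [haeA] with ζ hζ
      have h1 := hz1s ζ hζ
      have hval : ext' G ζ.1 = ((g ζ : ℝ) : ℂ) := by
        unfold ext'
        rw [dif_pos h1]
        show ((g (ζ.1, α * star ζ.1) : ℝ) : ℂ) = _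
        rw [← starRingEnd_apply, ← hz2 ζ hζ]
      rw [hval, Complex.real_smul]
    rw [e1]
    set I : ℂ := ∫ ζ, ext' G ζ.1 * f ζ ∂μ' with hI
    set C : ℝ := ∫ ζ, ‖f ζ‖ ∂μ' with hC
    have hCnn : 0 ≤ C := integral_nonneg fun _ => norm_nonneg _
    have hbound : ∀ ε : ℝ, 0 < ε → ‖I‖ ≤ ε * C := by
      intro ε hε
      obtain ⟨p, hpA, hpd⟩ := Metric.mem_closure_iff.mp hGmem ε hε
      have hIeq : I = ∫ ζ, ext' (G - p) ζ.1 * f ζ ∂μ' := by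
        have heq : (fun ζ : ℂ × ℂ => ext' (G - p) ζ.1 * f ζ) =
            fun ζ => ext' G ζ.1 * f ζ - ext' p ζ.1 * f ζ := by
          funext ζ
          rw [ext'_sub]
          ring
        rw [heq, integral_sub (hext_int G) (hext_int p), hadj_P p hpA, sub_zero, hI]
      rw [hIeq]
      have hb : ∀ ζ : ℂ × ℂ, ‖ext' (G - p) ζ.1 * f ζ‖ ≤ ε * ‖f ζ‖ := by
        intro ζ
        rw [norm_mul]
        apply mul_le_mul_of_nonneg_right _ (norm_nonneg _)
        calc ‖ext' (G - p) ζ.1‖ ≤ ‖G - p‖ := ext'_norm_le _ _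
          _ = dist G p := (dist_eq_norm G p).symm
          _ ≤ ε := le_of_lt hpd
      calc ‖∫ ζ, ext' (G - p) ζ.1 * f ζ ∂μ'‖ ≤ ∫ ζ, ε * ‖f ζ‖ ∂μ' :=
            norm_integral_le_of_norm_le (hf'.norm.const_mul ε) (Eventually.of_forall hb)
        _ = ε * C := by rw [integral_const_mul, hC]
    have hInorm : ‖I‖ = 0 := by
      by_contra hne
      have hpos : 0 < ‖I‖ := lt_of_le_of_ne (norm_nonneg _) (Ne.symm hne)
      have hb := hbound (‖I‖ / (2 * (C + 1))) (div_pos hpos (by positivity))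
      have : ‖I‖ / (2 * (C + 1)) * C < ‖I‖ := by
        rw [div_mul_eq_mul_div]
        rw [div_lt_iff₀ (by positivity)]
        nlinarith
      linarith
    exact norm_eq_zero.mp hInorm
  have hnn : (fun ζ => (‖f ζ‖₊ : ℝ≥0∞)) =ᵐ[μ'] 0 := by
    filter_upwards [hfzero] with ζ h
    simp [h]
  calc ∫⁻ ζ in A, (‖f ζ‖₊ : ℝ≥0∞) ∂ρ = ∫⁻ ζ, (‖f ζ‖₊ : ℝ≥0∞) ∂μ' := rfl
    _ = 0 := by
        rw [lintegral_congr_ae hnn]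
        simp
end
end
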